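/- arXiv:2509.05770 — 6 statements merged into one kernel-verified Lean document; each statement's English description precedes it below -/
import Mathlib

section
/- Let V be a finite-dimensional vector space over a field F with dim V = n > 1, let G ≤ GL(V) be a finite irreducible subgroup, and let g ∈ G. Suppose G is generated by k conjugates of g, and let d = dim((g − λ·Id)V) for some λ ∈ F. Then n ≤ d·k. -/
open Module Submodule LinearMap

/-- A unit of the endomorphism ring as a linear equivalence. -/
noncomputable def unitToEquiv {F V : Type*} [Field F] [AddCommGroup V] [Module F V]
    (u : (V →ₗ[F] V)ˣ) : V ≃ₗ[F] V :=
  LinearEquiv.ofLinear (u : V →ₗ[F] V) (↑u⁻¹ : V →ₗ[F] V)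
    (by rw [← Module.End.mul_eq_comp, u.mul_inv]; rfl)
    (by rw [← Module.End.mul_eq_comp, u.inv_mul]; rfl)

lemma map_unit_eq {F V : Type*} [Field F] [AddCommGroup V] [Module F V] [FiniteDimensional F V]
    (u : (V →ₗ[F] V)ˣ) (S : Submodule F V) (h : Submodule.map (u : V →ₗ[F] V) S ≤ S) :
    Submodule.map (u : V →ₗ[F] V) S = S := by
  apply Submodule.eq_of_le_of_finrank_le h
  have : Submodule.map (u : V →ₗ[F] V) S
      = Submodule.map ((unitToEquiv u : V ≃ₗ[F] V) : V →ₗ[F] V) S := rfl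
  rw [this, LinearEquiv.finrank_map_eq]

lemma invariant_of_gens {F V : Type*} [Field F] [AddCommGroup V] [Module F V]
    [FiniteDimensional F V] (G : Subgroup (V →ₗ[F] V)ˣ) {k : ℕ}
    (gs : Fin k → (V →ₗ[F] V)ˣ) (hgen : Subgroup.closure (Set.range gs) = G)
    (S : Submodule F V) (hS : ∀ i, ∀ v ∈ S, ((gs i : (V →ₗ[F] V)ˣ) : V →ₗ[F] V) v ∈ S) :
    ∀ x ∈ G, ∀ v ∈ S, ((x : (V →ₗ[F] V)ˣ) : V →ₗ[F] V) v ∈ S := by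
  have key : ∀ x ∈ G, Submodule.map ((x : (V →ₗ[F] V)ˣ) : V →ₗ[F] V) S = S := by
    intro x hx
    rw [← hgen] at hx
    induction hx using Subgroup.closure_induction with
    | mem y hy =>
      obtain ⟨i, rfl⟩ := hy
      exact map_unit_eq _ _ (Submodule.map_le_iff_le_comap.mpr fun v hv => hS i v hv)
    | one => rw [Units.val_one, Module.End.one_eq_id, Submodule.map_id]
    | mul y z hy hz ihy ihz =>
      rw [Units.val_mul, Module.End.mul_eq_comp, Submodule.map_comp, ihz, ihy]
    | inv y hy ih =>
      conv_lhs => rw [← ih]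
      rw [← Submodule.map_comp, ← Module.End.mul_eq_comp, ← Units.val_mul, inv_mul_cancel,
        Units.val_one, Module.End.one_eq_id, Submodule.map_id]
  intro x hx v hv
  rw [← key x hx]
  exact Submodule.mem_map_of_mem hv

lemma finrank_iSup_le' {F V : Type*} [Field F] [AddCommGroup V] [Module F V]
    [FiniteDimensional F V] {k : ℕ} (W : Fin k → Submodule F V) :
    finrank F ↥(⨆ i, W i) ≤ ∑ i, finrank F ↥(W i) := by
  induction k with
  | zero => simp
  | succ m ih =>
    have h1 : (⨆ i, W i) = W 0 ⊔ ⨆ i : Fin m, W i.succ := by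
      apply le_antisymm
      · apply iSup_le
        intro i
        induction i using Fin.cases with
        | zero => exact le_sup_left
        | succ j => exact le_trans (le_iSup (fun i : Fin m => W i.succ) j) le_sup_right
      · exact sup_le (le_iSup W 0) (iSup_le fun j => le_iSup W j.succ)
    rw [h1, Fin.sum_univ_succ]
    have h2 := Submodule.finrank_sup_add_finrank_inf_eq (W 0) (⨆ i : Fin m, W i.succ)
    have h3 := ih (fun i => W i.succ)
    omega

/-- If a finite irreducible linear group `G ≤ GL(V)`, with `dim V = n > 1`, is generated by
`k` conjugates of `g`, and `d = dim ((g - λ·Id) V)`, then `n ≤ d * k`. -/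
theorem stmt0 {F V : Type*} [Field F] [AddCommGroup V] [Module F V] [FiniteDimensional F V]
    (n : ℕ) (hn : Module.finrank F V = n) (h1 : 1 < n)
    (G : Subgroup (V →ₗ[F] V)ˣ) [Finite G]
    (hirr : ∀ W : Submodule F V,
      (∀ x ∈ G, ∀ v ∈ W, ((x : (V →ₗ[F] V)ˣ) : V →ₗ[F] V) v ∈ W) → W = ⊥ ∨ W = ⊤)
    (g : (V →ₗ[F] V)ˣ) (hg : g ∈ G)
    (k : ℕ) (gs : Fin k → (V →ₗ[F] V)ˣ)
    (hconj : ∀ i, ∃ x ∈ G, gs i = x * g * x⁻¹)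
    (hgen : Subgroup.closure (Set.range gs) = G)
    (lam : F) (d : ℕ)
    (hd : d = Module.finrank F
      (LinearMap.range ((g : V →ₗ[F] V) - lam • (LinearMap.id : V →ₗ[F] V)))) :
    n ≤ d * k := by
  let Wi : Fin k → Submodule F V :=
    fun i => LinearMap.range (((gs i : (V →ₗ[F] V)ˣ) : V →ₗ[F] V) - lam • LinearMap.id)
  let W : Submodule F V := ⨆ i, Wi i
  -- each Wi has finrank d
  have hrank : ∀ i, finrank F ↥(Wi i) = d := by
    intro i
    obtain ⟨x, hx, hxg⟩ := hconj i
    have hcomp : ((gs i : (V →ₗ[F] V)ˣ) : V →ₗ[F] V) - lam • LinearMap.id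
        = ((x : V →ₗ[F] V).comp ((g : V →ₗ[F] V) - lam • LinearMap.id)).comp
            (↑x⁻¹ : V →ₗ[F] V) := by
      ext v
      have hxv : (x : V →ₗ[F] V) ((↑x⁻¹ : V →ₗ[F] V) v) = v := by
        have h := LinearMap.congr_fun x.mul_inv v
        rwa [Module.End.mul_apply, Module.End.one_apply] at h
      simp [hxg, LinearMap.sub_apply, LinearMap.smul_apply, map_sub, map_smul,
        Module.End.mul_apply, hxv]
    have hsurj : LinearMap.range (↑x⁻¹ : V →ₗ[F] V) = ⊤ :=
      LinearMap.range_eq_top.mpr (unitToEquiv x⁻¹).surjective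
    have hWieq : Wi i
        = Submodule.map ((unitToEquiv x : V ≃ₗ[F] V) : V →ₗ[F] V)
            (LinearMap.range ((g : V →ₗ[F] V) - lam • LinearMap.id)) := by
      show LinearMap.range (((gs i : (V →ₗ[F] V)ˣ) : V →ₗ[F] V) - lam • LinearMap.id) = _
      rw [hcomp, LinearMap.range_comp, hsurj, Submodule.map_top, LinearMap.range_comp]
      rfl
    rw [hWieq, LinearEquiv.finrank_map_eq, hd]
  -- W is G-invariant
  have hWinv : ∀ x ∈ G, ∀ v ∈ W, ((x : (V →ₗ[F] V)ˣ) : V →ₗ[F] V) v ∈ W := by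
    apply invariant_of_gens G gs hgen
    intro i v hv
    have h1' : ((gs i : (V →ₗ[F] V)ˣ) : V →ₗ[F] V) v
        = (((gs i : (V →ₗ[F] V)ˣ) : V →ₗ[F] V)
            - lam • (LinearMap.id : V →ₗ[F] V)) v + lam • v := by
      rw [LinearMap.sub_apply, LinearMap.smul_apply, LinearMap.id_apply]
      abel
    rw [h1']
    exact W.add_mem (le_iSup Wi i (LinearMap.mem_range_self _ v)) (W.smul_mem lam hv)
  rcases hirr W hWinv with hbot | htop
  · -- W = ⊥ : every generator is lam • id, contradiction with irreducibility
    exfalso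
    have hscal : ∀ i, ((gs i : (V →ₗ[F] V)ˣ) : V →ₗ[F] V) = lam • LinearMap.id := by
      intro i
      have hle : Wi i = ⊥ := le_bot_iff.mp (hbot ▸ le_iSup Wi i)
      have h0 : (((gs i : (V →ₗ[F] V)ˣ) : V →ₗ[F] V) - lam • LinearMap.id) = 0 :=
        LinearMap.range_eq_bot.mp hle
      exact sub_eq_zero.mp h0
    have hpos : 0 < finrank F V := by omega
    have : Nontrivial V := Module.nontrivial_of_finrank_pos hpos
    obtain ⟨v, hv⟩ := exists_ne (0 : V)
    have hSinv : ∀ x ∈ G, ∀ w ∈ Submodule.span F {v},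
        ((x : (V →ₗ[F] V)ˣ) : V →ₗ[F] V) w ∈ Submodule.span F {v} := by
      apply invariant_of_gens G gs hgen
      intro i w hw
      rw [hscal i]
      exact Submodule.smul_mem _ lam hw
    rcases hirr _ hSinv with hb | ht
    · exact hv ((Submodule.mem_bot F).mp (hb ▸ Submodule.mem_span_singleton_self v))
    · have hone : finrank F ↥(Submodule.span F {v}) = 1 := finrank_span_singleton hv
      rw [ht, finrank_top, hn] at hone
      omega
  · -- W = ⊤ : count dimensions
    have hle := finrank_iSup_le' Wi
    rw [show (⨆ i, Wi i) = W from rfl, htop, finrank_top, hn] at hle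
    calc n ≤ ∑ i, finrank F ↥(Wi i) := hle
    _ = ∑ _i : Fin k, d := by simp only [hrank]
    _ = d * k := by simp [Finset.sum_const, mul_comm]
end

section
/- Let M₁, M₂ be diagonal non-scalar matrices over a field such that M = M₁ ⊗ M₂ is almost cyclic and each M_i is similar to its inverse M_i^{-1}. Then every eigenvalue multiplicity of M is at most 2, and if e is an eigenvalue of M of multiplicity 2 then e ∈ {1, −1}. -/
open Matrix Polynomial

/-- A square matrix is cyclic if its characteristic polynomial coincides with its minimal
polynomial. -/
def IsCyclicMat {K : Type*} [Field K] {ι : Type*} [Fintype ι] [DecidableEq ι]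
    (A : Matrix ι ι K) : Prop :=
  A.charpoly = minpoly K A

/-- A square matrix `M` of size `s` is almost cyclic if for some scalar `α` it is similar to
a block-diagonal matrix `diag(α·Id_k, M₁)` with `M₁` cyclic and `0 ≤ k < s`. -/
def IsAlmostCyclicMat {K : Type*} [Field K] {ι : Type*} [Fintype ι] [DecidableEq ι]
    (M : Matrix ι ι K) : Prop :=
  ∃ (α : K) (k l : ℕ) (e : (Fin k ⊕ Fin l) ≃ ι) (M₁ : Matrix (Fin l) (Fin l) K)
    (P : (Matrix ι ι K)ˣ), 0 < l ∧ IsCyclicMat M₁ ∧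
      M = (P : Matrix ι ι K) * (Matrix.reindex e e
        (Matrix.fromBlocks (α • (1 : Matrix (Fin k) (Fin k) K)) 0 0 M₁)) * ((P⁻¹ : (Matrix ι ι K)ˣ) : Matrix ι ι K)

namespace Stmt5Aux

variable {K : Type*} [Field K] [DecidableEq K] {ι : Type*} [Fintype ι] [DecidableEq ι]

lemma charmatrix_eq (A : Matrix ι ι K) :
    charmatrix A = (X : K[X]) • (1 : Matrix ι ι K[X]) - A.map C := by
  ext i j
  rcases eq_or_ne i j with rfl | hij
  · simp [charmatrix_apply_eq, Matrix.one_apply]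
  · simp [charmatrix_apply_ne _ _ _ hij, Matrix.one_apply_ne hij]

lemma charpoly_diag (d : ι → K) :
    (Matrix.diagonal d).charpoly = ∏ i, (X - C (d i)) := by
  have h : charmatrix (Matrix.diagonal d) = Matrix.diagonal fun i => (X : K[X]) - C (d i) := by
    ext i j
    rcases eq_or_ne i j with rfl | hij
    · simp [charmatrix_apply_eq]
    · simp [charmatrix_apply_ne _ _ _ hij, Matrix.diagonal_apply_ne _ hij]
  rw [Matrix.charpoly, h, Matrix.det_diagonal]

lemma charpoly_conj (P : (Matrix ι ι K)ˣ) (B : Matrix ι ι K) :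
    ((P : Matrix ι ι K) * B * (↑P⁻¹ : Matrix ι ι K)).charpoly = B.charpoly := by
  have hPQ : (P : Matrix ι ι K).map C * ((↑P⁻¹ : Matrix ι ι K)).map C = 1 := by
    rw [← Matrix.map_mul, Units.mul_inv]
    exact Matrix.map_one _ (map_zero C) (map_one C)
  have hcm : charmatrix ((P : Matrix ι ι K) * B * (↑P⁻¹ : Matrix ι ι K)) =
      (P : Matrix ι ι K).map C * charmatrix B * ((↑P⁻¹ : Matrix ι ι K)).map C := by
    rw [charmatrix_eq, charmatrix_eq, Matrix.map_mul, Matrix.map_mul, mul_sub, sub_mul,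
      mul_smul_comm, smul_mul_assoc, mul_one, hPQ]
  rw [Matrix.charpoly, Matrix.charpoly, hcm, Matrix.det_mul, Matrix.det_mul]
  calc ((P : Matrix ι ι K).map C).det * (charmatrix B).det * (((↑P⁻¹ : Matrix ι ι K)).map C).det
      = (charmatrix B).det * (((P : Matrix ι ι K).map C).det * (((↑P⁻¹ : Matrix ι ι K)).map C).det) := by ring
    _ = (charmatrix B).det * ((((P : Matrix ι ι K)).map C * ((↑P⁻¹ : Matrix ι ι K)).map C).det) := by rw [Matrix.det_mul]
    _ = (charmatrix B).det := by rw [hPQ, Matrix.det_one, mul_one]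



lemma aeval_conj (q : K[X]) (P : (Matrix ι ι K)ˣ) (B : Matrix ι ι K) :
    aeval ((P : Matrix ι ι K) * B * (↑P⁻¹ : Matrix ι ι K)) q =
      (P : Matrix ι ι K) * aeval B q * (↑P⁻¹ : Matrix ι ι K) := by
  induction q using Polynomial.induction_on' with
  | add p q hp hq => rw [map_add, map_add, hp, hq, mul_add, add_mul]
  | monomial n c =>
    rw [aeval_monomial, aeval_monomial, Units.conj_pow]
    simp only [← mul_assoc]
    rw [Algebra.commutes c ((P : Matrix ι ι K))]

lemma aeval_diag (q : K[X]) (d : ι → K) :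
    aeval (Matrix.diagonal d) q = Matrix.diagonal fun i => q.eval (d i) := by
  induction q using Polynomial.induction_on' with
  | add p q hp hq =>
    rw [map_add, hp, hq, Matrix.diagonal_add]
    congr 1 with i
    simp
  | monomial n c =>
    rw [aeval_monomial, Matrix.diagonal_pow]
    have : (algebraMap K (Matrix ι ι K)) c = Matrix.diagonal fun _ => c := by
      rw [Matrix.algebraMap_eq_diagonal]; rfl
    rw [this, Matrix.diagonal_mul_diagonal]
    congr 1 with i
    simp [eval_monomial]

lemma fromBlocks_pow {k l : ℕ} (A : Matrix (Fin k) (Fin k) K) (D : Matrix (Fin l) (Fin l) K)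
    (n : ℕ) : (Matrix.fromBlocks A 0 0 D) ^ n = Matrix.fromBlocks (A ^ n) 0 0 (D ^ n) := by
  induction n with
  | zero => simp [Matrix.fromBlocks_one]
  | succ n ih =>
    rw [pow_succ, pow_succ, pow_succ, ih, Matrix.fromBlocks_multiply]
    simp

lemma aeval_fromBlocks (q : K[X]) {k l : ℕ} (A : Matrix (Fin k) (Fin k) K)
    (D : Matrix (Fin l) (Fin l) K) :
    aeval (Matrix.fromBlocks A 0 0 D) q =
      Matrix.fromBlocks (aeval A q) 0 0 (aeval D q) := by
  induction q using Polynomial.induction_on' with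
  | add p q hp hq => rw [map_add, map_add, map_add, hp, hq, Matrix.fromBlocks_add]; simp
  | monomial n c =>
    rw [aeval_monomial, aeval_monomial, aeval_monomial, fromBlocks_pow,
      Algebra.algebraMap_eq_smul_one, Algebra.algebraMap_eq_smul_one,
      Algebra.algebraMap_eq_smul_one, smul_mul_assoc, smul_mul_assoc, smul_mul_assoc,
      one_mul, one_mul, one_mul, Matrix.fromBlocks_smul]
    simp


lemma roots_prod_eq (g : ι → K) :
    (∏ i, ((X : K[X]) - C (g i))).roots = Multiset.map g Finset.univ.val := by
  have h : (∏ i, ((X : K[X]) - C (g i)))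
      = ((Finset.univ.val.map g).map fun a => (X : K[X]) - C a).prod := by
    rw [Multiset.map_map]
    rfl
  rw [h, roots_multiset_prod_X_sub_C]

lemma count_filter_eq (g : ι → K) (lam : K) :
    (Finset.univ.filter fun p => g p = lam).card
      = Multiset.count lam (Multiset.map g Finset.univ.val) := by
  rw [Multiset.count_map]
  simp only [Finset.card, Finset.filter]
  congr 1
  exact Multiset.filter_congr fun x _ => by constructor <;> (intro h; exact h.symm)

/-- Key: if `diagonal g` is almost cyclic, there is `α` such that every eigenvalue other
than `α` has multiplicity at most 1. -/
lemma repeated_unique {g : ι → K} (hac : IsAlmostCyclicMat (Matrix.diagonal g)) :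
    ∃ α : K, ∀ lam : K, lam ≠ α →
      (Finset.univ.filter fun p => g p = lam).card ≤ 1 := by
  obtain ⟨α, k, l, e, M₁, P, hl, hcyc, heq⟩ := hac
  refine ⟨α, ?_⟩
  -- characteristic polynomial factorization
  have hch : (Matrix.diagonal g).charpoly = ((X : K[X]) - C α) ^ k * M₁.charpoly := by
    rw [heq, charpoly_conj, Matrix.charpoly_reindex, Matrix.charpoly_fromBlocks_zero₂₁]
    congr 1
    rw [smul_one_eq_diagonal, charpoly_diag]
    simp [Finset.prod_const]
  -- the squarefree annihilating polynomial
  set s : Finset K := Finset.univ.image g with hs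
  set q₀ : K[X] := ∏ v ∈ s, (X - C v) with hq₀
  have hq₀sep : q₀.Separable := by
    have := (separable_prod_X_sub_C_iff' (f := fun v : K => v) (s := s)).2
      (fun x _ y _ h => h)
    simpa using this
  have haev : aeval (Matrix.diagonal g) q₀ = 0 := by
    rw [aeval_diag]
    have h0 : ∀ i, q₀.eval (g i) = 0 := by
      intro i
      rw [hq₀, eval_prod]
      refine Finset.prod_eq_zero (Finset.mem_image_of_mem g (Finset.mem_univ i)) ?_
      simp
    simp [h0]
  have haevM₁ : aeval M₁ q₀ = 0 := by
    have h1 : aeval (Matrix.diagonal g) q₀ =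
        (P : Matrix ι ι K) *
          aeval (Matrix.reindex e e (Matrix.fromBlocks (α • 1) 0 0 M₁)) q₀ *
          ((P⁻¹ : (Matrix ι ι K)ˣ) : Matrix ι ι K) := by
      rw [heq, aeval_conj]
    have h2 : aeval (Matrix.reindex e e (Matrix.fromBlocks (α • 1) 0 0 M₁)) q₀ = 0 := by
      have h3 :
          (P : Matrix ι ι K) *
            aeval (Matrix.reindex e e (Matrix.fromBlocks (α • 1) 0 0 M₁)) q₀ *
            ((P⁻¹ : (Matrix ι ι K)ˣ) : Matrix ι ι K) = 0 := by
        rw [← h1, haev]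
      calc aeval (Matrix.reindex e e (Matrix.fromBlocks (α • 1) 0 0 M₁)) q₀
          = ((P⁻¹ : (Matrix ι ι K)ˣ) : Matrix ι ι K) *
            ((P : Matrix ι ι K) *
              aeval (Matrix.reindex e e (Matrix.fromBlocks (α • 1) 0 0 M₁)) q₀ *
              ((P⁻¹ : (Matrix ι ι K)ˣ) : Matrix ι ι K)) * (P : Matrix ι ι K) := by
            simp only [← mul_assoc, Units.inv_mul, one_mul]
            rw [mul_assoc, Units.inv_mul, mul_one]
        _ = 0 := by rw [h3, mul_zero, zero_mul]
    have h4 : aeval (Matrix.fromBlocks (α • (1 : Matrix (Fin k) (Fin k) K)) 0 0 M₁) q₀ = 0 := by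
      have h5 : aeval (Matrix.reindex e e (Matrix.fromBlocks (α • 1) 0 0 M₁)) q₀ =
          Matrix.reindex e e (aeval (Matrix.fromBlocks (α • 1) 0 0 M₁) q₀) := by
        have := aeval_algHom_apply
          ((Matrix.reindexAlgEquiv K K e).toAlgHom)
          (Matrix.fromBlocks (α • (1 : Matrix (Fin k) (Fin k) K)) 0 0 M₁) q₀
        simpa using this
      rw [h5] at h2
      apply (Matrix.reindex e e).injective
      simpa using h2
    rw [aeval_fromBlocks] at h4
    have := congrArg Matrix.toBlocks₂₂ h4
    rw [Matrix.toBlocks_fromBlocks₂₂] at this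
    exact this.trans (by ext i j; rfl)
  have hsepM₁ : M₁.charpoly.Separable := by
    have hdvd : minpoly K M₁ ∣ q₀ := minpoly.dvd K M₁ haevM₁
    rw [hcyc]
    exact hq₀sep.of_dvd hdvd
  intro lam hlam
  have hne : (((X : K[X]) - C α) ^ k * M₁.charpoly) ≠ 0 :=
    (((monic_X_sub_C α).pow k).mul M₁.charpoly_monic).ne_zero
  rw [count_filter_eq, ← roots_prod_eq, ← charpoly_diag, hch, Polynomial.roots_mul hne,
    Multiset.count_add, Polynomial.roots_pow, roots_X_sub_C, Multiset.count_nsmul,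
    Multiset.count_singleton]
  simp only [hlam, if_false, mul_zero, zero_add]
  exact count_roots_le_one hsepM₁ lam

/-- closure of the diagonal values under inversion -/
lemma inv_closure {s : ℕ} (d : Fin s → K)
    (h : ∃ P : (Matrix (Fin s) (Fin s) K)ˣ,
      Matrix.diagonal d = (P : Matrix (Fin s) (Fin s) K) *
        Matrix.diagonal (fun i => (d i)⁻¹) *
        ((P⁻¹ : (Matrix (Fin s) (Fin s) K)ˣ) : Matrix (Fin s) (Fin s) K)) :
    ∀ i, ∃ i', d i' = (d i)⁻¹ := by
  obtain ⟨P, hP⟩ := h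
  have hroots : Multiset.map d Finset.univ.val
      = Multiset.map (fun i => (d i)⁻¹) Finset.univ.val := by
    rw [← roots_prod_eq, ← roots_prod_eq, ← charpoly_diag, ← charpoly_diag, hP, charpoly_conj]
  intro i
  have hmem : (d i)⁻¹ ∈ Multiset.map (fun i => (d i)⁻¹) Finset.univ.val :=
    Multiset.mem_map_of_mem _ (Finset.mem_univ i)
  rw [← hroots] at hmem
  obtain ⟨i', _, hi'⟩ := Multiset.mem_map.1 hmem
  exact ⟨i', hi'⟩

/-- a non-scalar diagonal matrix has two distinct diagonal values -/
lemma nonconstant {s : ℕ} (d : Fin s → K)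
    (h : ¬∃ c : K, Matrix.diagonal d = c • (1 : Matrix (Fin s) (Fin s) K)) :
    ∃ i j, d i ≠ d j := by
  by_contra hcon
  push_neg at hcon
  apply h
  rcases Nat.eq_zero_or_pos s with hs | hs
  · subst hs
    exact ⟨0, Subsingleton.elim _ _⟩
  · refine ⟨d ⟨0, hs⟩, ?_⟩
    rw [smul_one_eq_diagonal]
    exact congrArg Matrix.diagonal (funext fun i => hcon i ⟨0, hs⟩)


lemma main_comb {m n : ℕ} (d₁ : Fin m → K) (d₂ : Fin n → K)
    (hd₁ : ∀ i, d₁ i ≠ 0) (hd₂ : ∀ j, d₂ j ≠ 0)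
    (hne₁ : ∃ i j, d₁ i ≠ d₁ j) (hne₂ : ∃ i j, d₂ i ≠ d₂ j)
    (hcl₁ : ∀ i, ∃ i', d₁ i' = (d₁ i)⁻¹) (hcl₂ : ∀ j, ∃ j', d₂ j' = (d₂ j)⁻¹)
    (hU : ∀ lam mu : K,
      2 ≤ (Finset.univ.filter fun pr : Fin m × Fin n => d₁ pr.1 * d₂ pr.2 = lam).card →
      2 ≤ (Finset.univ.filter fun pr : Fin m × Fin n => d₁ pr.1 * d₂ pr.2 = mu).card →
      lam = mu) :
    (∀ lam : K,
      (Finset.univ.filter fun pr : Fin m × Fin n => d₁ pr.1 * d₂ pr.2 = lam).card ≤ 2) ∧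
    (∀ e : K,
      (Finset.univ.filter fun pr : Fin m × Fin n => d₁ pr.1 * d₂ pr.2 = e).card = 2 →
        e = 1 ∨ e = -1) := by
  classical
  set N : K → ℕ :=
    fun lam => (Finset.univ.filter fun pr : Fin m × Fin n => d₁ pr.1 * d₂ pr.2 = lam).card
    with hNdef
  have hmem : ∀ (mu : K) (p : Fin m × Fin n), d₁ p.1 * d₂ p.2 = mu →
      p ∈ Finset.univ.filter fun pr : Fin m × Fin n => d₁ pr.1 * d₂ pr.2 = mu :=
    fun mu p hp => Finset.mem_filter.2 ⟨Finset.mem_univ _, hp⟩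
  have htwo : ∀ (mu : K) (p q : Fin m × Fin n), p ≠ q →
      d₁ p.1 * d₂ p.2 = mu → d₁ q.1 * d₂ q.2 = mu → 2 ≤ N mu := by
    intro mu p q hpq hp hq
    exact Finset.one_lt_card.2 ⟨p, hmem mu p hp, q, hmem mu q hq, hpq⟩
  -- distinctness of coordinates of two witnesses for the same eigenvalue
  have hdist : ∀ (lam : K) (p q : Fin m × Fin n), p ≠ q →
      d₁ p.1 * d₂ p.2 = lam → d₁ q.1 * d₂ q.2 = lam →
      d₁ p.1 ≠ d₁ q.1 ∧ d₂ p.2 ≠ d₂ q.2 := by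
    intro lam p q hpq hp hq
    have hA : d₁ p.1 ≠ d₁ q.1 := by
      intro h1
      have hb : d₂ p.2 = d₂ q.2 := by
        apply mul_left_cancel₀ (hd₁ p.1)
        rw [hp, h1, hq]
      have hor : p.1 ≠ q.1 ∨ p.2 ≠ q.2 := by
        by_contra hc
        push_neg at hc
        exact hpq (Prod.ext hc.1 hc.2)
      rcases hor with hfst | hsnd
      · obtain ⟨j', hj'⟩ : ∃ j', d₂ j' ≠ d₂ p.2 := by
          obtain ⟨ja, jb, hjab⟩ := hne₂
          by_cases hcase : d₂ ja = d₂ p.2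
          · exact ⟨jb, by rw [← hcase]; exact fun h => hjab h.symm⟩
          · exact ⟨ja, hcase⟩
        have h2 : 2 ≤ N (d₁ p.1 * d₂ j') := by
          refine htwo _ (p.1, j') (q.1, j') ?_ rfl ?_
          · intro h
            rw [Prod.mk.injEq] at h
            exact hfst h.1
          · show d₁ q.1 * d₂ j' = d₁ p.1 * d₂ j'
            rw [h1]
        have h3 : 2 ≤ N lam := htwo _ p q hpq hp hq
        have hmulam := hU _ _ h2 h3
        apply hj'
        apply mul_left_cancel₀ (hd₁ p.1)
        rw [hmulam, ← hp]
      · obtain ⟨i', hi'⟩ : ∃ i', d₁ i' ≠ d₁ p.1 := by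
          obtain ⟨ia, ib, hiab⟩ := hne₁
          by_cases hcase : d₁ ia = d₁ p.1
          · exact ⟨ib, by rw [← hcase]; exact fun h => hiab h.symm⟩
          · exact ⟨ia, hcase⟩
        have h2 : 2 ≤ N (d₁ i' * d₂ p.2) := by
          refine htwo _ (i', p.2) (i', q.2) ?_ rfl ?_
          · intro h
            rw [Prod.mk.injEq] at h
            exact hsnd h.2
          · show d₁ i' * d₂ q.2 = d₁ i' * d₂ p.2
            rw [hb]
        have h3 : 2 ≤ N lam := htwo _ p q hpq hp hq
        have hmulam := hU _ _ h2 h3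
        apply hi'
        apply mul_right_cancel₀ (hd₂ p.2)
        rw [hmulam, ← hp]
    refine ⟨hA, ?_⟩
    intro h2
    apply hA
    apply mul_right_cancel₀ (hd₂ p.2)
    rw [hp]
    conv_lhs => rw [← hq, ← h2]
  -- key product relation from inverse closure
  have hG : ∀ (lam : K) (p q : Fin m × Fin n), p ≠ q →
      d₁ p.1 * d₂ p.2 = lam → d₁ q.1 * d₂ q.2 = lam →
      d₂ p.2 * d₂ q.2 = 1 := by
    intro lam p q hpq hp hq
    have hA : d₁ p.1 ≠ d₁ q.1 := (hdist lam p q hpq hp hq).1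
    obtain ⟨j', hj'⟩ := hcl₂ q.2
    obtain ⟨j'', hj''⟩ := hcl₂ p.2
    have key : d₁ q.1 * d₂ j'' = d₁ p.1 * d₂ j' := by
      have hz1 := hd₂ p.2
      have hz2 := hd₂ q.2
      rw [hj', hj'']
      field_simp
      linear_combination hq - hp
    have h2 : 2 ≤ N (d₁ p.1 * d₂ j') := by
      refine htwo _ (p.1, j') (q.1, j'') ?_ rfl key
      intro h
      rw [Prod.mk.injEq] at h
      exact hA (congrArg d₁ h.1)
    have h3 : 2 ≤ N lam := htwo _ p q hpq hp hq
    have hmulam := hU _ _ h2 h3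
    have : d₂ p.2 = (d₂ q.2)⁻¹ := by
      apply mul_left_cancel₀ (hd₁ p.1)
      rw [hp, ← hmulam, hj']
    rw [this, inv_mul_cancel₀ (hd₂ q.2)]
  constructor
  · -- multiplicities at most 2
    intro lam
    by_contra hgt
    push_neg at hgt
    have h3 : 3 ≤ N lam := hgt
    obtain ⟨p, hpmem⟩ : ∃ p, p ∈ Finset.univ.filter
        fun pr : Fin m × Fin n => d₁ pr.1 * d₂ pr.2 = lam := by
      apply Finset.card_pos.1
      omega
    have hp : d₁ p.1 * d₂ p.2 = lam := (Finset.mem_filter.1 hpmem).2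
    have hcard' : 1 < ((Finset.univ.filter
        fun pr : Fin m × Fin n => d₁ pr.1 * d₂ pr.2 = lam).erase p).card := by
      rw [Finset.card_erase_of_mem hpmem]
      omega
    obtain ⟨q, hq', r, hr', hqr⟩ := Finset.one_lt_card.1 hcard'
    have hq : d₁ q.1 * d₂ q.2 = lam := (Finset.mem_filter.1 (Finset.mem_of_mem_erase hq')).2
    have hr : d₁ r.1 * d₂ r.2 = lam := (Finset.mem_filter.1 (Finset.mem_of_mem_erase hr')).2
    have hqp : q ≠ p := Finset.ne_of_mem_erase hq'
    have hrp : r ≠ p := Finset.ne_of_mem_erase hr'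
    have e1 : d₂ p.2 * d₂ q.2 = 1 := hG lam p q (Ne.symm hqp) hp hq
    have e2 : d₂ p.2 * d₂ r.2 = 1 := hG lam p r (Ne.symm hrp) hp hr
    have : d₂ q.2 = d₂ r.2 := mul_left_cancel₀ (hd₂ p.2) (e1.trans e2.symm)
    exact (hdist lam q r hqr hq hr).2 this
  · -- an eigenvalue of multiplicity 2 is 1 or -1
    intro lam hcard
    obtain ⟨p, hpmem, q, hqmem, hpq⟩ := Finset.one_lt_card.1 (by omega :
      1 < (Finset.univ.filter fun pr : Fin m × Fin n => d₁ pr.1 * d₂ pr.2 = lam).card)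
    have hp : d₁ p.1 * d₂ p.2 = lam := (Finset.mem_filter.1 hpmem).2
    have hq : d₁ q.1 * d₂ q.2 = lam := (Finset.mem_filter.1 hqmem).2
    have e1 : d₂ p.2 * d₂ q.2 = 1 := hG lam p q hpq hp hq
    have e2 : d₁ p.1 * d₁ q.1 = 1 := by
      have hB : d₂ p.2 ≠ d₂ q.2 := (hdist lam p q hpq hp hq).2
      obtain ⟨i', hi'⟩ := hcl₁ q.1
      obtain ⟨i'', hi''⟩ := hcl₁ p.1
      have key : d₁ i'' * d₂ q.2 = d₁ i' * d₂ p.2 := by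
        have hz1 := hd₁ p.1
        have hz2 := hd₁ q.1
        rw [hi', hi'']
        field_simp
        linear_combination hq - hp
      have h2 : 2 ≤ N (d₁ i' * d₂ p.2) := by
        refine htwo _ (i', p.2) (i'', q.2) ?_ rfl key
        intro h
        rw [Prod.mk.injEq] at h
        exact hB (congrArg d₂ h.2)
      have h3 : 2 ≤ N lam := htwo _ p q hpq hp hq
      have hmulam := hU _ _ h2 h3
      have : d₁ p.1 = (d₁ q.1)⁻¹ := by
        apply mul_right_cancel₀ (hd₂ p.2)
        rw [hp, ← hmulam, hi']
      rw [this, inv_mul_cancel₀ (hd₁ q.1)]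
    have : lam * lam = 1 := by
      have hll : lam * lam = (d₁ p.1 * d₁ q.1) * (d₂ p.2 * d₂ q.2) := by
        calc lam * lam = (d₁ p.1 * d₂ p.2) * (d₁ q.1 * d₂ q.2) := by rw [hp, hq]
          _ = (d₁ p.1 * d₁ q.1) * (d₂ p.2 * d₂ q.2) := by ring
      rw [hll, e1, e2, one_mul]
    exact mul_self_eq_one_iff.1 this

end Stmt5Aux

/-- If `M₁, M₂` are diagonal non-scalar matrices, each similar to its inverse, and
`M = M₁ ⊗ M₂` is almost cyclic, then every eigenvalue multiplicity of `M` is at most `2`,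
and any eigenvalue of multiplicity `2` equals `1` or `-1`. -/
theorem stmt5 {K : Type*} [Field K] [DecidableEq K] (m n : ℕ)
    (d₁ : Fin m → K) (d₂ : Fin n → K)
    (hd₁ : ∀ i, d₁ i ≠ 0) (hd₂ : ∀ j, d₂ j ≠ 0)
    (hns₁ : ¬∃ c : K, Matrix.diagonal d₁ = c • (1 : Matrix (Fin m) (Fin m) K))
    (hns₂ : ¬∃ c : K, Matrix.diagonal d₂ = c • (1 : Matrix (Fin n) (Fin n) K))
    (hinv₁ : ∃ P : (Matrix (Fin m) (Fin m) K)ˣ,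
      Matrix.diagonal d₁ = (P : Matrix (Fin m) (Fin m) K) *
        Matrix.diagonal (fun i => (d₁ i)⁻¹) * ((P⁻¹ : (Matrix (Fin m) (Fin m) K)ˣ) : Matrix (Fin m) (Fin m) K))
    (hinv₂ : ∃ Q : (Matrix (Fin n) (Fin n) K)ˣ,
      Matrix.diagonal d₂ = (Q : Matrix (Fin n) (Fin n) K) *
        Matrix.diagonal (fun j => (d₂ j)⁻¹) * ((Q⁻¹ : (Matrix (Fin n) (Fin n) K)ˣ) : Matrix (Fin n) (Fin n) K))
    (hac : IsAlmostCyclicMat (Matrix.kronecker (Matrix.diagonal d₁) (Matrix.diagonal d₂))) :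
    (∀ lam : K,
      (Finset.univ.filter fun pr : Fin m × Fin n => d₁ pr.1 * d₂ pr.2 = lam).card ≤ 2) ∧
    (∀ e : K,
      (Finset.univ.filter fun pr : Fin m × Fin n => d₁ pr.1 * d₂ pr.2 = e).card = 2 →
        e = 1 ∨ e = -1) := by
  classical
  have hdiag : Matrix.kronecker (Matrix.diagonal d₁) (Matrix.diagonal d₂)
      = Matrix.diagonal (fun p : Fin m × Fin n => d₁ p.1 * d₂ p.2) :=
    Matrix.diagonal_kronecker_diagonal d₁ d₂
  rw [hdiag] at hac
  obtain ⟨α, hα⟩ := Stmt5Aux.repeated_unique hac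
  have hU : ∀ lam mu : K,
      2 ≤ (Finset.univ.filter fun pr : Fin m × Fin n => d₁ pr.1 * d₂ pr.2 = lam).card →
      2 ≤ (Finset.univ.filter fun pr : Fin m × Fin n => d₁ pr.1 * d₂ pr.2 = mu).card →
      lam = mu := by
    intro lam mu hl hm
    have h1 : lam = α := by
      by_contra h
      have := hα lam h
      omega
    have h2 : mu = α := by
      by_contra h
      have := hα mu h
      omega
    rw [h1, h2]
  exact Stmt5Aux.main_comb d₁ d₂ hd₁ hd₂ (Stmt5Aux.nonconstant d₁ hns₁)
    (Stmt5Aux.nonconstant d₂ hns₂) (Stmt5Aux.inv_closure d₁ hinv₁)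
    (Stmt5Aux.inv_closure d₂ hinv₂) hU
end

section
/- If an almost cyclic matrix M acts on a finite-dimensional vector space W and U is an M-stable subspace of W, then the restriction of M to U and the induced map of M on W/U are both almost cyclic. -/
open Polynomial

/-- An endomorphism `f` of a finite-dimensional space is almost cyclic if for some scalar `α`
the quotient of its characteristic polynomial by its minimal polynomial is a power of
`(X - α)`. -/
def IsAlmostCyclicEnd {F V : Type*} [Field F] [AddCommGroup V] [Module F V]
    [FiniteDimensional F V] (f : Module.End F V) : Prop :=
  ∃ (α : F) (j : ℕ), LinearMap.charpoly f = (X - C α) ^ j * minpoly F f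

section AlmostCyclicAux

universe u₁ u₂
variable {F : Type u₁} {W : Type u₂} [Field F] [AddCommGroup W] [Module F W]


/-- aeval commutes with restriction to an invariant submodule. -/
lemma aeval_restrict_coe (f : Module.End F W) {N : Submodule F W} (h : ∀ x ∈ N, f x ∈ N)
    (p : F[X]) (x : N) :
    ((Polynomial.aeval (f.restrict h) p x : N) : W) = Polynomial.aeval f p (x : W) := by
  induction p using Polynomial.induction_on' with
  | add p q hp hq => simp [hp, hq]
  | monomial n a =>
      simp only [aeval_monomial, Module.End.mul_apply, LinearMap.smul_apply,
        Module.algebraMap_end_apply]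
      rw [Module.End.pow_restrict]
      simp [LinearMap.restrict_apply]

/-- aeval commutes with the quotient map. -/
lemma aeval_mapQ_mk (f : Module.End F W) {N : Submodule F W} (h : N ≤ N.comap f)
    (p : F[X]) (x : W) :
    Polynomial.aeval (Submodule.mapQ N N f h) p (Submodule.Quotient.mk x) =
      Submodule.Quotient.mk (Polynomial.aeval f p x) := by
  induction p using Polynomial.induction_on' with
  | add p q hp hq => simp [hp, hq]
  | monomial n a =>
      simp only [aeval_monomial, Module.End.mul_apply, LinearMap.smul_apply,
        Module.algebraMap_end_apply, map_smul]
      have : ∀ (n : ℕ) (y : W), (Submodule.mapQ N N f h ^ n) (Submodule.Quotient.mk y) =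
          Submodule.Quotient.mk ((f ^ n) y) := by
        intro n
        induction n with
        | zero => simp
        | succ n ih =>
            intro y
            rw [pow_succ, pow_succ]
            simp [ih, Submodule.mapQ_apply]
      rw [this, ← Submodule.Quotient.mk_smul]

lemma aeval_mem_of_mem (f : Module.End F W) {N : Submodule F W} (h : ∀ x ∈ N, f x ∈ N)
    (p : F[X]) {x : W} (hx : x ∈ N) : Polynomial.aeval f p x ∈ N := by
  have := aeval_restrict_coe f h p ⟨x, hx⟩
  rw [← this]; exact (Polynomial.aeval (f.restrict h) p ⟨x, hx⟩).2

/-- The map `p ↦ (aeval f p) v`, as an `F`-linear map. -/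
noncomputable def zmap (f : Module.End F W) (v : W) : F[X] →ₗ[F] W where
  toFun p := Polynomial.aeval f p v
  map_add' p q := by simp
  map_smul' a p := by simp

lemma zmap_apply (f : Module.End F W) (v : W) (p : F[X]) :
    zmap f v p = Polynomial.aeval f p v := rfl

lemma zmap_stable (f : Module.End F W) (v : W) :
    ∀ x ∈ LinearMap.range (zmap f v), f x ∈ LinearMap.range (zmap f v) := by
  rintro x ⟨p, rfl⟩
  exact ⟨X * p, by simp [zmap_apply, Module.End.mul_apply]⟩

lemma mem_zmap_range {f : Module.End F W} {v x : W} :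
    x ∈ LinearMap.range (zmap f v) ↔ ∃ p : F[X], Polynomial.aeval f p v = x :=
  Iff.rfl

lemma self_mem_zmap_range (f : Module.End F W) (v : W) : v ∈ LinearMap.range (zmap f v) :=
  ⟨1, by simp [zmap_apply]⟩

/-- An invariant submodule of a cyclic subspace is cyclic. -/
lemma exists_zmap_range_eq (f : Module.End F W) (v : W) (N : Submodule F W)
    (hNf : ∀ x ∈ N, f x ∈ N) (hNZ : N ≤ LinearMap.range (zmap f v)) :
    ∃ v' ∈ N, LinearMap.range (zmap f v') = N := by
  let I : Ideal F[X] :=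
    { carrier := {p | zmap f v p ∈ N}
      add_mem' := fun {p} {q} hp hq => by
        simp only [Set.mem_setOf_eq, map_add]
        exact N.add_mem hp hq
      zero_mem' := by simp [Set.mem_setOf_eq]
      smul_mem' := fun r p hp => by
        simp only [Set.mem_setOf_eq, smul_eq_mul, zmap_apply, map_mul,
          Module.End.mul_apply] at *
        exact aeval_mem_of_mem f hNf r hp }
  obtain ⟨q, hq⟩ : Submodule.IsPrincipal I := IsPrincipalIdealRing.principal I
  have hqI : q ∈ I := by rw [hq]; exact Ideal.subset_span rfl
  refine ⟨zmap f v q, hqI, le_antisymm ?_ ?_⟩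
  · rintro x ⟨p, rfl⟩
    have : zmap f (zmap f v q) p = zmap f v (p * q) := by
      simp [zmap_apply, map_mul, Module.End.mul_apply]
    rw [this]
    have : p * q ∈ I := I.mul_mem_left p hqI
    exact this
  · intro x hx
    obtain ⟨p, rfl⟩ := hNZ hx
    have hpI : p ∈ I := hx
    rw [hq, Ideal.submodule_span_eq, Ideal.mem_span_singleton] at hpI
    obtain ⟨s, rfl⟩ := hpI
    refine ⟨s, ?_⟩
    simp [zmap_apply, map_mul, Module.End.mul_apply, mul_comm q s]

lemma monic_dvd_eq {a b : F[X]} (ha : a.Monic) (hb : b.Monic) (hdvd : a ∣ b)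
    (hle : b.natDegree ≤ a.natDegree) : b = a := by
  obtain ⟨t, rfl⟩ := hdvd
  have ht : t.Monic := ha.of_mul_monic_left hb
  have : a.natDegree + t.natDegree ≤ a.natDegree := by
    rwa [← Polynomial.natDegree_mul ha.ne_zero ht.ne_zero]
  have : t.natDegree = 0 := by omega
  rw [ht.natDegree_eq_zero.mp this, mul_one]

section FD
variable [FiniteDimensional F W]

lemma end_isIntegral {V : Type*} [AddCommGroup V] [Module F V] [FiniteDimensional F V]
    (g : Module.End F V) : IsIntegral F g :=
  ⟨LinearMap.charpoly g, LinearMap.charpoly_monic g, LinearMap.aeval_self_charpoly g⟩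

/-- On a cyclic invariant subspace, the characteristic polynomial of the restriction equals
its minimal polynomial. -/
lemma charpoly_restrict_zmap_range (f : Module.End F W) (v : W)
    (h : ∀ x ∈ LinearMap.range (zmap f v), f x ∈ LinearMap.range (zmap f v) :=
      zmap_stable f v) :
    LinearMap.charpoly (f.restrict h) = minpoly F (f.restrict h) := by
  classical
  have hmmonic : (minpoly F (f.restrict h)).Monic := minpoly.monic (end_isIntegral _)
  have hdvd : minpoly F (f.restrict h) ∣ LinearMap.charpoly (f.restrict h) :=
    LinearMap.minpoly_dvd_charpoly _
  set m := minpoly F (f.restrict h) with hm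
  set d := m.natDegree with hd
  have hkill : ∀ z (hz : z ∈ LinearMap.range (zmap f v)), Polynomial.aeval f m z = 0 := by
    intro z hz
    have h3 := aeval_restrict_coe f h m ⟨z, hz⟩
    rw [hm, minpoly.aeval F (f.restrict h)] at h3
    simpa using h3.symm
  have hspan : LinearMap.range (zmap f v) ≤
      Submodule.span F (Set.range fun i : Fin d => (f ^ (i : ℕ)) v) := by
    rintro x ⟨p, rfl⟩
    have hmod : zmap f v p = zmap f v (p %ₘ m) := by
      conv_lhs => rw [← Polynomial.modByMonic_add_div p m]
      simp only [zmap_apply, map_add, map_mul, LinearMap.add_apply, Module.End.mul_apply]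
      rw [hkill (Polynomial.aeval f (p /ₘ m) v) ⟨p /ₘ m, rfl⟩, add_zero]
    rw [hmod]
    rcases eq_or_ne (p %ₘ m) 0 with h0 | h0
    · simp [h0, zmap_apply]
    · have hdeg : (p %ₘ m).natDegree < d := by
        exact Polynomial.natDegree_lt_natDegree h0 (Polynomial.degree_modByMonic_lt p hmmonic)
      rw [zmap_apply, Polynomial.aeval_eq_sum_range' hdeg]
      simp only [LinearMap.coe_sum, Finset.sum_apply, LinearMap.smul_apply]
      refine Submodule.sum_mem _ fun i hi => Submodule.smul_mem _ _ ?_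
      rw [Finset.mem_range] at hi
      exact Submodule.subset_span ⟨⟨i, hi⟩, rfl⟩
  have hrank : Module.finrank F (LinearMap.range (zmap f v)) ≤ d := by
    refine (Submodule.finrank_mono hspan).trans ?_
    have h1 := finrank_span_le_card (R := F) (Set.range fun i : Fin d => (f ^ (i : ℕ)) v)
    rw [Set.toFinset_card] at h1
    refine h1.trans ?_
    exact (Fintype.card_range_le _).trans (by simp)
  have hcd : (LinearMap.charpoly (f.restrict h)).natDegree ≤ d := by
    rw [LinearMap.charpoly_natDegree]
    exact hrank
  exact monic_dvd_eq hmmonic (LinearMap.charpoly_monic _) hdvd hcd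

end FD

section FD2
variable [FiniteDimensional F W]

open Module Module.Free Matrix in
/-- The characteristic polynomial is multiplicative over an invariant subspace. -/
lemma charpoly_eq_restrict_mul_mapQ (f : Module.End F W) (U : Submodule F W)
    (hU : ∀ x ∈ U, f x ∈ U) :
    LinearMap.charpoly f =
      LinearMap.charpoly (f.restrict hU) *
        LinearMap.charpoly (Submodule.mapQ U U f (fun x hx => hU x hx)) := by
  classical
  obtain ⟨C, hC⟩ := Submodule.exists_isCompl U
  let e : (U × C) ≃ₗ[F] W := Submodule.prodEquivOfIsCompl U C hC
  let φ : Module.End F (U × C) := e.symm.conj f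
  have hconj : LinearMap.charpoly φ = LinearMap.charpoly f := e.symm.charpoly_conj f
  let bU := chooseBasis F U
  let bC := chooseBasis F C
  let b := bU.prod bC
  -- the three blocks
  let πU : W →ₗ[F] U := Submodule.linearProjOfIsCompl U C hC
  let πC : W →ₗ[F] C := Submodule.linearProjOfIsCompl C U hC.symm
  let g : Module.End F C := πC ∘ₗ f ∘ₗ C.subtype
  let Bm : Matrix (ChooseBasisIndex F U) (ChooseBasisIndex F C) F :=
    LinearMap.toMatrix bC bU (πU ∘ₗ f ∘ₗ C.subtype)
  have hφ1 : ∀ u : U, φ (u, 0) = (f.restrict hU u, 0) := by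
    intro u
    show e.symm (f (e (u, 0))) = _
    rw [Submodule.coe_prodEquivOfIsCompl']
    simp only [ZeroMemClass.coe_zero, add_zero]
    have : f (u : W) = ((f.restrict hU u : U) : W) := rfl
    rw [this, Submodule.prodEquivOfIsCompl_symm_apply_left]
  have hφ2 : ∀ c : C, φ (0, c) = (πU (f (c : W)), πC (f (c : W))) := by
    intro c
    show e.symm (f (e (0, c))) = _
    rw [Submodule.coe_prodEquivOfIsCompl']
    simp only [ZeroMemClass.coe_zero, zero_add]
    apply (Submodule.prodEquivOfIsCompl U C hC).injective
    rw [LinearEquiv.apply_symm_apply, Submodule.coe_prodEquivOfIsCompl']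
    exact (Submodule.projection_add_projection_eq_self hC (f (c : W))).symm
  have hblock : LinearMap.toMatrix b b φ =
      Matrix.fromBlocks (LinearMap.toMatrix bU bU (f.restrict hU)) Bm 0
        (LinearMap.toMatrix bC bC g) := by
    ext i j
    rcases i with i | i <;> rcases j with j | j <;>
      simp only [LinearMap.toMatrix_apply, Matrix.fromBlocks_apply₁₁, Matrix.fromBlocks_apply₁₂,
        Matrix.fromBlocks_apply₂₁, Matrix.fromBlocks_apply₂₂, Matrix.zero_apply]
    · rw [show b (Sum.inl j) = (bU j, (0 : C)) from Prod.ext (bU.prod_apply_inl_fst bC j)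
        (bU.prod_apply_inl_snd bC j), hφ1, Basis.prod_repr_inl]
    · rw [show b (Sum.inr j) = ((0 : U), bC j) from Prod.ext (bU.prod_apply_inr_fst bC j)
        (bU.prod_apply_inr_snd bC j), hφ2, Basis.prod_repr_inl]
      simp [Bm, LinearMap.toMatrix_apply]
    · rw [show b (Sum.inl j) = (bU j, (0 : C)) from Prod.ext (bU.prod_apply_inl_fst bC j)
        (bU.prod_apply_inl_snd bC j), hφ1, Basis.prod_repr_inr]
      simp
    · rw [show b (Sum.inr j) = ((0 : U), bC j) from Prod.ext (bU.prod_apply_inr_fst bC j)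
        (bU.prod_apply_inr_snd bC j), hφ2, Basis.prod_repr_inr]
      rfl
  -- charpoly of g equals charpoly of the quotient map
  have hgq : LinearMap.charpoly g =
      LinearMap.charpoly (Submodule.mapQ U U f (fun x hx => hU x hx)) := by
    let q : C ≃ₗ[F] (W ⧸ U) := (Submodule.quotientEquivOfIsCompl U C hC).symm
    have : Submodule.mapQ U U f (fun x hx => hU x hx) = q.conj g := by
      apply LinearMap.ext
      intro x
      obtain ⟨c, rfl⟩ : ∃ c : C, Submodule.Quotient.mk (c : W) = x := by
        obtain ⟨w, rfl⟩ := Submodule.Quotient.mk_surjective U x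
        refine ⟨πC w, ?_⟩
        rw [(Submodule.Quotient.eq U).2]
        have h3 := Submodule.projection_add_projection_eq_self hC w
        rw [← eq_sub_iff_add_eq] at h3
        have h2 : ((πC w : C) : W) - w = -(πU w : W) := by
          rw [show (πU w : W) = U.projection C hC w from rfl, h3,
            show ((πC w : C) : W) = C.projection U hC.symm w from rfl]; abel
        rw [h2]
        exact U.neg_mem (πU w).2
      rw [Submodule.mapQ_apply]
      have hqc : q.symm (Submodule.Quotient.mk (c : W)) = c := by
        show Submodule.quotientEquivOfIsCompl U C hC _ = c
        exact Submodule.quotientEquivOfIsCompl_apply_mk_right hC c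
      rw [LinearEquiv.conj_apply]
      simp only [LinearMap.coe_comp, LinearEquiv.coe_coe, Function.comp_apply]
      rw [hqc]
      show Submodule.Quotient.mk (f (c : W)) = q (g c)
      have : ((g c : C) : W) - f (c : W) = -(πU (f (c : W)) : W) := by
        have h3 := Submodule.projection_add_projection_eq_self hC (f (c : W))
        rw [← eq_sub_iff_add_eq] at h3
        show ((πC (f (c : W)) : C) : W) - f (c : W) = _
        rw [show (πU (f (c : W)) : W) = U.projection C hC (f (c : W)) from rfl, h3,
          show ((πC (f (c : W)) : C) : W) = C.projection U hC.symm (f (c : W)) from rfl]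
        abel
      show _ = (Submodule.quotientEquivOfIsCompl U C hC).symm (g c)
      rw [Submodule.quotientEquivOfIsCompl_symm_apply]
      rw [(Submodule.Quotient.eq U).2]
      rw [← neg_sub, this]
      exact U.neg_mem (U.neg_mem (πU (f (c : W))).2)
    rw [this, LinearEquiv.charpoly_conj]
  rw [← hconj, ← LinearMap.charpoly_toMatrix φ b, hblock,
    Matrix.charpoly_fromBlocks_zero₂₁, LinearMap.charpoly_toMatrix, LinearMap.charpoly_toMatrix,
    hgq]

end FD2

lemma matrix_charpoly_add_smul_one {n : Type*} [DecidableEq n] [Fintype n]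
    (A : Matrix n n F) (α : F) :
    (A + α • 1).charpoly = Polynomial.aeval (X - C α : F[X]) A.charpoly := by
  have hmat : Matrix.charmatrix (A + α • 1) =
      (Matrix.charmatrix A).map (fun p => Polynomial.aeval (X - C α : F[X]) p) := by
    ext i j
    by_cases h : i = j
    · subst h
      simp [Matrix.charmatrix_apply, Matrix.one_apply, Matrix.diagonal_apply, map_sub, sub_sub,
        add_comm]
    · simp [Matrix.charmatrix_apply, Matrix.one_apply, Matrix.diagonal_apply, h]
  rw [Matrix.charpoly, Matrix.charpoly, hmat]
  exact (RingHom.map_det ((Polynomial.aeval (X - C α : F[X]) : F[X] →ₐ[F] F[X]) :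
    F[X] →+* F[X]) _).symm

section FD3
variable [FiniteDimensional F W]

open Module in
/-- If `(f - α)^k = 0` then the characteristic polynomial of `f` is a power of `X - α`. -/
lemma charpoly_of_aeval_pow_eq_zero (f : Module.End F W) (α : F) (k : ℕ)
    (h : Polynomial.aeval f ((X - C α) ^ k) = 0) :
    LinearMap.charpoly f = (X - C α) ^ Module.finrank F W := by
  classical
  have hXC : Polynomial.aeval f (X - C α : F[X]) = f - α • 1 := by
    simp only [map_sub, Polynomial.aeval_X, Polynomial.aeval_C,
      Module.algebraMap_end_eq_smul_id, Module.End.one_eq_id]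
  have hnil : IsNilpotent (f - α • (1 : Module.End F W)) := by
    refine ⟨k, ?_⟩
    rw [← hXC, ← map_pow, h]
  have hg : LinearMap.charpoly (f - α • 1) = X ^ finrank F W :=
    (LinearMap.isNilpotent_iff_charpoly _).mp hnil
  let b := Module.Free.chooseBasis F W
  have hmat : LinearMap.toMatrix b b f = LinearMap.toMatrix b b (f - α • 1) + α • 1 := by
    rw [map_sub, map_smul, LinearMap.toMatrix_one]
    abel
  rw [← LinearMap.charpoly_toMatrix f b, hmat, matrix_charpoly_add_smul_one,
    LinearMap.charpoly_toMatrix, hg]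
  rw [map_pow, Polynomial.aeval_X]

end FD3

section FD4
variable [FiniteDimensional F W]

set_option maxHeartbeats 1000000 in
open Module DirectSum in
/-- There is a vector whose annihilator ideal is generated by the minimal polynomial. -/
lemma exists_min_vector (f : Module.End F W) :
    ∃ v : W, ∀ q : F[X], Polynomial.aeval f q v = 0 → minpoly F f ∣ q := by
  classical
  let V := Module.AEval' f
  let N := ULift.{u₁} V
  let eN : N ≃ₗ[F[X]] V := ULift.moduleEquiv
  haveI : Module.Finite F[X] N := Module.Finite.equiv eN.symm
  have hminne : minpoly F f ≠ 0 := minpoly.ne_zero (end_isIntegral f)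
  have hsmul : ∀ (q : F[X]) (x : W),
      q • (Module.AEval'.of f x) = Module.AEval'.of f (Polynomial.aeval f q x) := by
    intro q x
    exact (Module.AEval.of_aeval_smul f q x).symm
  have htor : Module.IsTorsion F[X] N := by
    intro x
    refine ⟨⟨minpoly F f, mem_nonZeroDivisors_of_ne_zero hminne⟩, ?_⟩
    apply ULift.down_injective
    rw [ULift.smul_down]
    have h2 := hsmul (minpoly F f) ((Module.AEval'.of f).symm x.down)
    rw [LinearEquiv.apply_symm_apply, minpoly.aeval, LinearMap.zero_apply, map_zero] at h2
    exact h2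
  obtain ⟨ι, hι, p, hp, e, ⟨eqv⟩⟩ := Module.equiv_directSum_of_isTorsion htor
  haveI := hι
  -- the element with all components 1
  let w0 : ⨁ i : ι, F[X] ⧸ Submodule.span F[X] {p i ^ e i} :=
    ∑ i : ι, DirectSum.lof F[X] ι _ i (Submodule.Quotient.mk 1)
  have hcomp : ∀ (q : F[X]) (i : ι), DirectSum.component F[X] ι _ i (q • w0) =
      Submodule.Quotient.mk q := by
    intro q i
    rw [map_smul, map_sum]
    have : ∀ j : ι, DirectSum.component F[X] ι (fun i => F[X] ⧸ Submodule.span F[X] {p i ^ e i}) i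
        (DirectSum.lof F[X] ι (fun i => F[X] ⧸ Submodule.span F[X] {p i ^ e i}) j
        (Submodule.Quotient.mk 1)) = if j = i then Submodule.Quotient.mk 1 else 0 := by
      intro j
      by_cases h : j = i
      · subst h; simp [DirectSum.component.lof_self]
      · simp only [DirectSum.component.of, dif_neg h, if_neg h]
    rw [Finset.sum_congr rfl fun j _ => this j, Finset.sum_ite_eq' Finset.univ i
      (fun _ => Submodule.Quotient.mk 1), if_pos (Finset.mem_univ i)]
    have : (q • Submodule.Quotient.mk (1 : F[X]) :
        F[X] ⧸ Submodule.span F[X] {p i ^ e i}) = Submodule.Quotient.mk (q * 1) := by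
      rw [← Submodule.Quotient.mk_smul]; simp [smul_eq_mul]
    rw [this, mul_one]
  set v' : N := eqv.symm w0 with hv'
  refine ⟨(Module.AEval'.of f).symm v'.down, fun q hq => ?_⟩
  -- q annihilates v', hence each component, hence q ∈ each prime power ideal
  have hqv' : q • v' = 0 := by
    apply ULift.down_injective
    rw [ULift.smul_down]
    have h2 := hsmul q ((Module.AEval'.of f).symm v'.down)
    rw [LinearEquiv.apply_symm_apply, hq, map_zero] at h2
    exact h2
  have hqw0 : q • w0 = 0 := by
    have := congrArg eqv hqv'
    rw [map_smul, hv', LinearEquiv.apply_symm_apply, map_zero] at this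
    exact this
  have hdvd : ∀ i : ι, p i ^ e i ∣ q := by
    intro i
    have := hcomp q i
    rw [hqw0, map_zero] at this
    have hmem : q ∈ Submodule.span F[X] {p i ^ e i} :=
      (Submodule.Quotient.mk_eq_zero _).mp this.symm
    rw [Submodule.mem_span_singleton] at hmem
    obtain ⟨a, ha⟩ := hmem
    exact ⟨a, by rw [← ha, smul_eq_mul, mul_comm]⟩
  -- hence q annihilates everything
  have hq0 : Polynomial.aeval f q = 0 := by
    apply LinearMap.ext
    intro x
    have hx : q • (⟨Module.AEval'.of f x⟩ : N) = 0 := by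
      have hy : q • eqv ⟨Module.AEval'.of f x⟩ = 0 := by
        apply DirectSum.ext_component F[X]
        intro i
        rw [map_smul, map_zero]
        obtain ⟨r, hr⟩ := Submodule.Quotient.mk_surjective _
          (DirectSum.component F[X] ι _ i (eqv ⟨Module.AEval'.of f x⟩))
        rw [← hr]
        have : (q • Submodule.Quotient.mk r :
            F[X] ⧸ Submodule.span F[X] {p i ^ e i}) = Submodule.Quotient.mk (q * r) := by
          rw [← Submodule.Quotient.mk_smul]; simp [smul_eq_mul]
        rw [this, Submodule.Quotient.mk_eq_zero, Submodule.mem_span_singleton]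
        obtain ⟨a, ha⟩ := hdvd i
        exact ⟨a * r, by rw [smul_eq_mul, ha]; ring⟩
      have := congrArg eqv.symm hy
      rwa [map_smul, LinearEquiv.symm_apply_apply, map_zero] at this
    have h3 : q • (Module.AEval'.of f x) = 0 := by
      have h4 := congrArg ULift.down hx
      rw [ULift.smul_down] at h4
      exact h4
    rw [hsmul] at h3
    rw [LinearMap.zero_apply]
    exact (Module.AEval'.of f).map_eq_zero_iff.mp h3
  exact minpoly.dvd F f hq0

end FD4

section Main
variable [FiniteDimensional F W]

/-- If some power of `f - α` maps everything into a cyclic subspace, then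
the quotient of charpoly by minpoly is a power of `X - α`. -/
lemma almost_cyclic_of_controlled (f : Module.End F W) (α : F) (k : ℕ) (v : W)
    (hv : ∀ w : W, Polynomial.aeval f ((X - C α) ^ k) w ∈ LinearMap.range (zmap f v)) :
    ∃ j, LinearMap.charpoly f = (X - C α) ^ j * minpoly F f := by
  have h := zmap_stable f v
  have hchar := charpoly_eq_restrict_mul_mapQ f (LinearMap.range (zmap f v)) h
  have hcyc := charpoly_restrict_zmap_range f v h
  -- the quotient is annihilated by (X - α)^k
  have hq : Polynomial.aeval (Submodule.mapQ (LinearMap.range (zmap f v))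
      (LinearMap.range (zmap f v)) f (fun x hx => h x hx)) ((X - C α) ^ k) = 0 := by
    apply LinearMap.ext
    intro y
    obtain ⟨w, rfl⟩ := Submodule.Quotient.mk_surjective _ y
    rw [aeval_mapQ_mk, LinearMap.zero_apply, Submodule.Quotient.mk_eq_zero]
    exact hv w
  have hQchar := charpoly_of_aeval_pow_eq_zero _ α k hq
  set mz := minpoly F (f.restrict h) with hmz
  have hmzmonic : mz.Monic := minpoly.monic (end_isIntegral _)
  have hcf : LinearMap.charpoly f = mz * (X - C α) ^ Module.finrank F
      (W ⧸ LinearMap.range (zmap f v)) := by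
    rw [hchar, hcyc, hQchar]
  -- mz divides minpoly f
  have hmzdvd : mz ∣ minpoly F f := by
    apply minpoly.dvd
    apply LinearMap.ext
    intro x
    apply Subtype.ext
    rw [aeval_restrict_coe f h (minpoly F f) x]
    have : Polynomial.aeval f (minpoly F f) = 0 := minpoly.aeval F f
    rw [this]
    rfl
  obtain ⟨s, hs⟩ := hmzdvd
  have hsmonic : s.Monic := hmzmonic.of_mul_monic_left (hs ▸ minpoly.monic (end_isIntegral f))
  have hsdvd : s ∣ (X - C α) ^ Module.finrank F (W ⧸ LinearMap.range (zmap f v)) := by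
    have h1 : minpoly F f ∣ LinearMap.charpoly f := LinearMap.minpoly_dvd_charpoly f
    rw [hcf, hs] at h1
    exact (mul_dvd_mul_iff_left hmzmonic.ne_zero).mp h1
  obtain ⟨i, hik, hassoc⟩ := (dvd_prime_pow (Polynomial.prime_X_sub_C α) _).mp hsdvd
  have hseq : s = (X - C α) ^ i :=
    Polynomial.eq_of_monic_of_associated hsmonic ((Polynomial.monic_X_sub_C α).pow i) hassoc
  refine ⟨Module.finrank F (W ⧸ LinearMap.range (zmap f v)) - i, ?_⟩
  rw [hcf, hs, hseq]
  conv_lhs => rw [show Module.finrank F (W ⧸ LinearMap.range (zmap f v)) =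
    (Module.finrank F (W ⧸ LinearMap.range (zmap f v)) - i) + i from by omega]
  rw [pow_add]
  ring

/-- An almost cyclic endomorphism satisfies the control property. -/
lemma controlled_of_almost_cyclic (f : Module.End F W) (α : F) (j : ℕ)
    (hM : LinearMap.charpoly f = (X - C α) ^ j * minpoly F f) :
    ∃ (v : W) (k : ℕ), ∀ w : W,
      Polynomial.aeval f ((X - C α) ^ k) w ∈ LinearMap.range (zmap f v) := by
  obtain ⟨v, hvmin⟩ := exists_min_vector f
  have h := zmap_stable f v
  refine ⟨v, j, ?_⟩
  have hmineq : minpoly F (f.restrict h) = minpoly F f := by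
    have h1 : minpoly F (f.restrict h) ∣ minpoly F f := by
      apply minpoly.dvd
      apply LinearMap.ext
      intro x
      apply Subtype.ext
      rw [aeval_restrict_coe f h (minpoly F f) x, minpoly.aeval F f]
      rfl
    have h2 : minpoly F f ∣ minpoly F (f.restrict h) := by
      apply hvmin
      have h3 := aeval_restrict_coe f h (minpoly F (f.restrict h))
        ⟨v, self_mem_zmap_range f v⟩
      rw [minpoly.aeval] at h3
      simpa using h3.symm
    exact Polynomial.eq_of_monic_of_associated (minpoly.monic (end_isIntegral _))
      (minpoly.monic (end_isIntegral f)) (associated_of_dvd_dvd h1 h2)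
  have hchar := charpoly_eq_restrict_mul_mapQ f (LinearMap.range (zmap f v)) h
  have hcyc := charpoly_restrict_zmap_range f v h
  have hQ : LinearMap.charpoly (Submodule.mapQ (LinearMap.range (zmap f v))
      (LinearMap.range (zmap f v)) f (fun x hx => h x hx)) = (X - C α) ^ j := by
    have hne : minpoly F f ≠ 0 := minpoly.ne_zero (end_isIntegral f)
    have e1 : LinearMap.charpoly f = minpoly F f * LinearMap.charpoly
        (Submodule.mapQ (LinearMap.range (zmap f v)) (LinearMap.range (zmap f v)) f
          (fun x hx => h x hx)) := by
      rw [hchar, hcyc, hmineq]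
    apply mul_left_cancel₀ hne
    rw [← e1, hM]
    ring
  intro w
  have hCH := LinearMap.aeval_self_charpoly (Submodule.mapQ (LinearMap.range (zmap f v))
    (LinearMap.range (zmap f v)) f (fun x hx => h x hx))
  rw [hQ] at hCH
  have := congrArg (fun g => g (Submodule.Quotient.mk w :
    W ⧸ LinearMap.range (zmap f v))) hCH
  simp only [LinearMap.zero_apply] at this
  rw [aeval_mapQ_mk] at this
  exact (Submodule.Quotient.mk_eq_zero _).mp this

end Main

end AlmostCyclicAux

/-- If an almost cyclic endomorphism `M` of `W` stabilizes a subspace `U`, then the restriction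
of `M` to `U` and the induced endomorphism of `W / U` are both almost cyclic. -/
theorem stmt6 {F W : Type*} [Field F] [AddCommGroup W] [Module F W] [FiniteDimensional F W]
    (M : Module.End F W) (U : Submodule F W) (hU : ∀ x ∈ U, M x ∈ U)
    (hM : IsAlmostCyclicEnd M) :
    IsAlmostCyclicEnd (M.restrict hU) ∧
    IsAlmostCyclicEnd (Submodule.mapQ U U M (fun x hx => hU x hx)) := by
  obtain ⟨α, j, hM⟩ := hM
  obtain ⟨v, k, hv⟩ := controlled_of_almost_cyclic M α j hM
  constructor
  · set N := LinearMap.range (zmap M v) ⊓ U with hN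
    have hNf : ∀ x ∈ N, M x ∈ N := fun x hx => ⟨zmap_stable M v x hx.1, hU x hx.2⟩
    obtain ⟨v', hv'N, hrange⟩ := exists_zmap_range_eq M v N hNf inf_le_left
    have hv'U : v' ∈ U := hv'N.2
    refine ⟨α, ?_⟩
    apply almost_cyclic_of_controlled (M.restrict hU) α k ⟨v', hv'U⟩
    intro y
    have h1 : Polynomial.aeval M ((X - C α) ^ k) (y : W) ∈ N :=
      ⟨hv (y : W), aeval_mem_of_mem M hU _ y.2⟩
    rw [← hrange] at h1
    obtain ⟨p, hp⟩ := h1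
    refine ⟨p, ?_⟩
    apply Subtype.ext
    rw [zmap_apply, aeval_restrict_coe M hU p ⟨v', hv'U⟩, aeval_restrict_coe M hU _ y]
    exact hp
  · refine ⟨α, ?_⟩
    apply almost_cyclic_of_controlled _ α k (Submodule.Quotient.mk v)
    intro y
    obtain ⟨w, rfl⟩ := Submodule.Quotient.mk_surjective U y
    obtain ⟨p, hp⟩ := hv w
    refine ⟨p, ?_⟩
    rw [zmap_apply, aeval_mapQ_mk, aeval_mapQ_mk, ← hp]
    rfl
end

section
/- For every odd integer n ≥ 3, the alternating group A_n is generated by two n-cycles. -/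
open Equiv Equiv.Perm Subgroup Finset

/-- For every odd `n ≥ 3`, the alternating group `A_n` is generated by two `n`-cycles. -/
theorem stmt7 (n : ℕ) (hn : Odd n) (h3 : 3 ≤ n) :
    ∃ g h : Equiv.Perm (Fin n),
      g.IsCycle ∧ g.support = Finset.univ ∧
      h.IsCycle ∧ h.support = Finset.univ ∧
      Subgroup.closure {g, h} = alternatingGroup (Fin n) := by
  obtain ⟨m, rfl⟩ : ∃ m, n = m + 2 := ⟨n - 2, by omega⟩
  have hm : 1 ≤ m := by omega
  set g : Perm (Fin (m + 2)) := finRotate (m + 2) with hgdef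
  have hgc : g.IsCycle := isCycle_finRotate
  have hgs : g.support = Finset.univ := support_finRotate
  set t : Perm (Fin (m + 2)) := Equiv.swap 0 (g 0) with htdef
  have ht2 : t * t = 1 := Equiv.swap_mul_self _ _
  have htinv : t⁻¹ = t := Equiv.swap_inv _ _
  set h : Perm (Fin (m + 2)) := t * g * t⁻¹ with hhdef
  have hhc : h.IsCycle := hgc.conj
  have hhs : h.support = Finset.univ := by
    rw [hhdef, Equiv.Perm.support_conj, hgs, Finset.map_univ_equiv]
  refine ⟨g, h, hgc, hgs, hhc, hhs, ?_⟩
  set K := Subgroup.closure {g, h} with hKdef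
  -- membership in the alternating group
  have hsg : g ∈ alternatingGroup (Fin (m + 2)) := by
    rw [Equiv.Perm.mem_alternatingGroup, hgc.sign, hgs, Finset.card_univ, Fintype.card_fin,
      hn.neg_one_pow, neg_neg]
  have hsh : h ∈ alternatingGroup (Fin (m + 2)) :=
    (alternatingGroup.normal (α := Fin (m + 2))).conj_mem g hsg t
  have hgK : g ∈ K := Subgroup.subset_closure (by simp)
  have hhK : h ∈ K := Subgroup.subset_closure (by simp)
  have hKA : K ≤ alternatingGroup (Fin (m + 2)) := by
    rw [hKdef, Subgroup.closure_le]
    rintro x hx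
    simp only [Set.mem_insert_iff, Set.mem_singleton_iff] at hx
    rcases hx with rfl | rfl
    · exact hsg
    · exact hsh
  -- K is normal in the full symmetric group
  have hgt : Subgroup.closure {g, t} = ⊤ :=
    Equiv.Perm.closure_cycle_adjacent_swap hgc hgs 0
  have htmem : t ∈ Subgroup.normalizer (K : Set (Perm (Fin (m + 2)))) := by
    rw [Subgroup.mem_normalizer_iff]
    have key : ∀ b ∈ K, t * b * t⁻¹ ∈ K := by
      intro b hb
      induction hb using Subgroup.closure_induction with
      | mem x hx =>
        simp only [Set.mem_insert_iff, Set.mem_singleton_iff] at hx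
        rcases hx with rfl | rfl
        · exact hhK
        · have : t * h * t⁻¹ = g := by
            rw [hhdef, htinv]
            calc t * (t * g * t) * t = (t * t) * g * (t * t) := by group
              _ = g := by rw [ht2]; group
          rw [hhdef] at this ⊢
          rw [this]; exact hgK
      | one => simpa using K.one_mem
      | mul x y _ _ hx hy =>
        have : t * (x * y) * t⁻¹ = (t * x * t⁻¹) * (t * y * t⁻¹) := by group
        rw [this]; exact K.mul_mem hx hy
      | inv x _ hx =>
        have : t * x⁻¹ * t⁻¹ = (t * x * t⁻¹)⁻¹ := by group
        rw [this]; exact K.inv_mem hx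
    intro b
    constructor
    · exact key b
    · intro hb
      have e : t * (t * b * t⁻¹) * t⁻¹ = b := by
        rw [htinv]
        calc t * (t * b * t) * t = (t * t) * b * (t * t) := by group
          _ = b := by rw [ht2]; group
      exact e ▸ key _ hb
  have hKnormal : K.Normal := by
    rw [← Subgroup.normalizer_eq_top_iff]
    rw [eq_top_iff, ← hgt, Subgroup.closure_le]
    rintro x hx
    simp only [Set.mem_insert_iff, Set.mem_singleton_iff] at hx
    rcases hx with rfl | rfl
    · exact Subgroup.le_normalizer hgK
    · exact htmem
  -- the three-cycle h * g⁻¹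
  have h01 : g 0 ≠ 0 := by
    rw [← Equiv.Perm.mem_support, hgs]; exact Finset.mem_univ _
  have h12 : g (g 0) ≠ g 0 := by
    rw [← Equiv.Perm.mem_support, hgs]; exact Finset.mem_univ _
  have h02 : g (g 0) ≠ 0 := by
    have e0 : g 0 = 1 := by simp [hgdef, finRotate_succ_apply]
    have e1 : g (g 0) = (1 : Fin (m + 2)) + 1 := by rw [e0]; simp [hgdef, finRotate_succ_apply]
    rw [e1]
    intro hcon
    have hv : ((1 : Fin (m + 2)) + 1).val = 0 := by rw [hcon]; rfl
    rw [Fin.val_add, Fin.val_one, Nat.mod_eq_of_lt (by omega)] at hv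
    omega
  have hc3 : Equiv.Perm.IsThreeCycle (h * g⁻¹) := by
    have e : h * g⁻¹ = Equiv.swap (g 0) 0 * Equiv.swap (g 0) (g (g 0)) := by
      rw [hhdef, htinv, htdef]
      rw [Equiv.swap_comm (g 0) 0, Equiv.swap_apply_apply g 0 (g 0)]
      group
    rw [e]
    exact Equiv.Perm.isThreeCycle_swap_mul_swap_same h01 (Ne.symm h12) (Ne.symm h02)
  have hcK : h * g⁻¹ ∈ K := K.mul_mem hhK (K.inv_mem hgK)
  -- conclude
  haveI := hKnormal
  refine le_antisymm hKA ?_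
  have hKtop : K.subgroupOf (alternatingGroup (Fin (m + 2))) = ⊤ := by
    rcases Nat.lt_or_ge m 3 with hm3 | hm3
    · -- m = 1, i.e. n = 3
      have hm1 : m = 1 := by
        rcases hn with ⟨k, hk⟩; omega
      subst hm1
      have hcard : Nat.card (alternatingGroup (Fin 3)) = 3 := by
        have h2 : 2 * Fintype.card (alternatingGroup (Fin 3)) = 6 := by
          have := two_mul_card_alternatingGroup (α := Fin 3)
          rwa [Fintype.card_perm, Fintype.card_fin,
            show Nat.factorial 3 = 6 from rfl] at this
        rw [Nat.card_eq_fintype_card]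
        omega
      haveI : Fact (Nat.Prime 3) := ⟨by norm_num⟩
      haveI : IsSimpleGroup (alternatingGroup (Fin 3)) :=
        isSimpleGroup_of_prime_card hcard
      rcases IsSimpleGroup.eq_bot_or_eq_top_of_normal
        (K.subgroupOf (alternatingGroup (Fin 3))) inferInstance with hbot | htop
      · exfalso
        have : (⟨g, hsg⟩ : alternatingGroup (Fin 3)) ∈
            K.subgroupOf (alternatingGroup (Fin 3)) := Subgroup.mem_subgroupOf.2 hgK
        rw [hbot, Subgroup.mem_bot] at this
        exact hgc.ne_one (by simpa [Subtype.ext_iff] using this)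
      · exact htop
    · -- 5 ≤ m + 2
      have h5 : 5 ≤ Nat.card (Fin (m + 2)) := by rw [Nat.card_eq_fintype_card, Fintype.card_fin]; omega
      rw [eq_top_iff, ← hc3.alternating_normalClosure h5]
      refine Subgroup.normalClosure_le_normal ?_
      rw [Set.singleton_subset_iff, SetLike.mem_coe]
      exact Subgroup.mem_subgroupOf.2 hcK
  exact Subgroup.subgroupOf_eq_top.mp hKtop
end

section
/- For every even integer n > 6, the symmetric group S_n is generated by two n-cycles. -/
open Equiv Equiv.Perm Subgroup

/-- A bijection of types induces a group isomorphism of permutation groups. -/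
def permMulEquiv {α β : Type*} (e : α ≃ β) : Equiv.Perm α ≃* Equiv.Perm β :=
  { Equiv.permCongr e with
    map_mul' := fun p q => by
      ext x
      simp [Equiv.permCongr_apply, Equiv.Perm.mul_apply] }

lemma permMulEquiv_apply {α β : Type*} (e : α ≃ β) (g : Equiv.Perm α) (x : β) :
    permMulEquiv e g x = e (g (e.symm x)) := rfl

lemma isCycle_permMulEquiv {α β : Type*} (e : α ≃ β) {g : Equiv.Perm α}
    (hg : g.IsCycle) : (permMulEquiv e g).IsCycle := by
  obtain ⟨x, hx, h2⟩ := hg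
  refine ⟨e x, ?_, ?_⟩
  · rw [permMulEquiv_apply, e.symm_apply_apply]
    exact fun H => hx (e.injective H)
  · intro y hy
    have h' : g (e.symm y) ≠ e.symm y := by
      intro H
      apply hy
      rw [permMulEquiv_apply, H, e.apply_symm_apply]
    obtain ⟨i, hi⟩ := h2 h'
    refine ⟨i, ?_⟩
    rw [← map_zpow (permMulEquiv e)]
    rw [permMulEquiv_apply, e.symm_apply_apply, hi, e.apply_symm_apply]

lemma key (n : ℕ) [NeZero n] (hn : Even n) (h6 : 6 < n) :
    ∃ g h : Equiv.Perm (ZMod n),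
      g.IsCycle ∧ g.support = Finset.univ ∧
      h.IsCycle ∧ h.support = Finset.univ ∧
      Subgroup.closure {g, h} = (⊤ : Subgroup (Equiv.Perm (ZMod n))) := by
  haveI : Fact (1 < n) := ⟨by omega⟩
  -- helper: small positive naturals don't vanish in `ZMod n`
  have hcast : ∀ a : ℕ, 0 < a → a < n → ((a : ZMod n) ≠ 0) := by
    intro a ha han H
    rw [ZMod.natCast_eq_zero_iff] at H
    exact absurd (Nat.le_of_dvd ha H) (by omega)
  set c : Equiv.Perm (ZMod n) := Equiv.addRight 1 with hc
  have hc_apply : ∀ x : ZMod n, c x = x + 1 := fun x => rfl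
  have hc_inv_apply : ∀ x : ZMod n, c⁻¹ x = x - 1 := by
    intro x
    apply c.injective
    rw [Equiv.Perm.inv_def, Equiv.apply_symm_apply, hc_apply]
    ring
  have hc_pow : ∀ (k : ℕ), (c ^ k) (0 : ZMod n) = (k : ZMod n) := by
    intro k
    induction k with
    | zero => simp
    | succ k ih => rw [pow_succ', Equiv.Perm.mul_apply, ih, hc_apply]; push_cast; ring
  have hc_cycle : c.IsCycle := by
    refine ⟨0, ?_, ?_⟩
    · rw [hc_apply]
      simpa using (one_ne_zero : (1 : ZMod n) ≠ 0)
    · intro y _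
      refine ⟨(y.val : ℤ), ?_⟩
      rw [zpow_natCast, hc_pow, ZMod.natCast_rightInverse y]
  have hc_supp : c.support = Finset.univ := by
    apply Finset.eq_univ_iff_forall.mpr
    intro x
    rw [Equiv.Perm.mem_support, hc_apply]
    simpa using (one_ne_zero : (1 : ZMod n) ≠ 0)
  set τ : Equiv.Perm (ZMod n) := Equiv.swap 0 1 with hτ
  set h : Equiv.Perm (ZMod n) := c⁻¹ * τ * c⁻¹ with hh
  have hh_apply : ∀ x : ZMod n, h x = τ (x - 1) - 1 := by
    intro x
    rw [hh, Equiv.Perm.mul_apply, Equiv.Perm.mul_apply, hc_inv_apply, hc_inv_apply]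
  have h2ne0 : (2 : ZMod n) ≠ 0 := by
    have := hcast 2 (by norm_num) (by omega)
    simpa using this
  have hh_step : ∀ x : ZMod n, x ≠ 1 → x ≠ 2 → h x = x - 2 := by
    intro x hx1 hx2
    have hx1' : x - 1 ≠ 0 := fun H => hx1 (by linear_combination H)
    have hx2' : x - 1 ≠ 1 := fun H => hx2 (by linear_combination H)
    rw [hh_apply, hτ, Equiv.swap_apply_of_ne_of_ne hx1' hx2']
    ring
  have hh_one : h 1 = 0 := by
    rw [hh_apply, hτ]
    norm_num
  have hh_two : h 2 = -1 := by
    have h21 : (2 : ZMod n) - 1 = 1 := by ring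
    rw [hh_apply, hτ, h21, Equiv.swap_apply_right]
    ring
  have hh_fix : ∀ x : ZMod n, h x ≠ x := by
    intro x
    by_cases hx1 : x = 1
    · rw [hx1, hh_one]
      exact fun H => one_ne_zero H.symm
    by_cases hx2 : x = 2
    · rw [hx2, hh_two]
      intro H
      have h3 : ((3 : ℕ) : ZMod n) = 0 := by push_cast at H ⊢; linear_combination -H
      exact hcast 3 (by norm_num) (by omega) h3
    · rw [hh_step x hx1 hx2]
      intro H
      exact h2ne0 (by linear_combination -H)
  -- orbit coverage
  have horb_even : ∀ j : ℕ, 2 * j < n → ∃ k : ℕ, (h ^ k) 0 = -((2 * j : ℕ) : ZMod n) := by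
    intro j
    induction j with
    | zero => intro _; exact ⟨0, by simp⟩
    | succ j ih =>
      intro hj
      obtain ⟨k, hk⟩ := ih (by omega)
      refine ⟨k + 1, ?_⟩
      rw [pow_succ', Equiv.Perm.mul_apply, hk, hh_step]
      · push_cast; ring
      · intro H
        have h1 : ((2 * j + 1 : ℕ) : ZMod n) = 0 := by push_cast at H ⊢; linear_combination -H
        refine hcast (2 * j + 1) (by omega) ?_ h1
        rcases hn with ⟨m, hm⟩; omega
      · intro H
        have h1 : ((2 * j + 2 : ℕ) : ZMod n) = 0 := by push_cast at H ⊢; linear_combination -H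
        exact hcast (2 * j + 2) (by omega) (by omega) h1
  have hne2 : ((n - 2 : ℕ) : ZMod n) = -2 := by
    have h1 : ((n - 2 : ℕ) : ZMod n) + ((2 : ℕ) : ZMod n) = ((n : ℕ) : ZMod n) := by
      rw [← Nat.cast_add]; congr 1; omega
    rw [ZMod.natCast_self] at h1
    push_cast at h1
    linear_combination h1
  have horb_m1 : ∃ k : ℕ, (h ^ k) 0 = -1 := by
    obtain ⟨j, hj⟩ : ∃ j, n - 2 = 2 * j := by rcases hn with ⟨m, hm⟩; exact ⟨m - 1, by omega⟩
    obtain ⟨k, hk⟩ := horb_even j (by omega)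
    refine ⟨k + 1, ?_⟩
    have hval : (h ^ k) 0 = 2 := by
      rw [hk, ← hj, hne2]; ring
    rw [pow_succ', Equiv.Perm.mul_apply, hval, hh_two]
  have horb_odd : ∀ j : ℕ, 2 * j + 1 < n → ∃ k : ℕ, (h ^ k) 0 = -((2 * j + 1 : ℕ) : ZMod n) := by
    intro j
    induction j with
    | zero =>
      intro _
      obtain ⟨k, hk⟩ := horb_m1
      refine ⟨k, ?_⟩
      rw [hk]; norm_num
    | succ j ih =>
      intro hj
      obtain ⟨k, hk⟩ := ih (by omega)
      refine ⟨k + 1, ?_⟩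
      rw [pow_succ', Equiv.Perm.mul_apply, hk, hh_step]
      · push_cast; ring
      · intro H
        have h1 : ((2 * j + 2 : ℕ) : ZMod n) = 0 := by push_cast at H ⊢; linear_combination -H
        exact hcast (2 * j + 2) (by omega) (by omega) h1
      · intro H
        have h1 : ((2 * j + 3 : ℕ) : ZMod n) = 0 := by push_cast at H ⊢; linear_combination -H
        exact hcast (2 * j + 3) (by omega) (by omega) h1
  have horb : ∀ y : ZMod n, ∃ k : ℕ, (h ^ k) 0 = y := by
    intro y
    have hy : y = -(((-y).val : ℕ) : ZMod n) := by
      rw [ZMod.natCast_rightInverse (-y)]; ring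
    have hlt : (-y).val < n := ZMod.val_lt _
    rcases Nat.even_or_odd (-y).val with ⟨j, hj⟩ | ⟨j, hj⟩
    · obtain ⟨k, hk⟩ := horb_even j (by omega)
      refine ⟨k, ?_⟩
      rw [hk, hy]
      congr 2
      omega
    · obtain ⟨k, hk⟩ := horb_odd j (by omega)
      refine ⟨k, ?_⟩
      rw [hk, hy]
      congr 2
      omega
  have hh_cycle : h.IsCycle := by
    refine ⟨0, hh_fix 0, ?_⟩
    intro y _
    obtain ⟨k, hk⟩ := horb y
    exact ⟨(k : ℤ), by rw [zpow_natCast, hk]⟩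
  have hh_supp : h.support = Finset.univ := by
    apply Finset.eq_univ_iff_forall.mpr
    intro x
    rw [Equiv.Perm.mem_support]
    exact hh_fix x
  refine ⟨c, h, hc_cycle, hc_supp, hh_cycle, hh_supp, ?_⟩
  have hτ_mem : τ ∈ Subgroup.closure {c, h} := by
    have hτ_eq : τ = c * h * c := by rw [hh]; group
    rw [hτ_eq]
    exact mul_mem (mul_mem (subset_closure (Set.mem_insert _ _))
      (subset_closure (Set.mem_insert_of_mem _ rfl)))
      (subset_closure (Set.mem_insert _ _))
  rw [eq_top_iff, ← Equiv.Perm.closure_cycle_adjacent_swap hc_cycle hc_supp 0]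
  apply (Subgroup.closure_le _).mpr
  intro x hx
  simp only [Set.mem_insert_iff, Set.mem_singleton_iff] at hx
  rcases hx with rfl | rfl
  · exact subset_closure (Set.mem_insert _ _)
  · have hc0 : c 0 = (1 : ZMod n) := by rw [hc_apply]; ring
    rw [hc0]
    exact hτ_mem

/-- For every even `n > 6`, the symmetric group `S_n` is generated by two `n`-cycles. -/
theorem stmt9 (n : ℕ) (hn : Even n) (h6 : 6 < n) :
    ∃ g h : Equiv.Perm (Fin n),
      g.IsCycle ∧ g.support = Finset.univ ∧
      h.IsCycle ∧ h.support = Finset.univ ∧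
      Subgroup.closure {g, h} = (⊤ : Subgroup (Equiv.Perm (Fin n))) := by
  haveI : NeZero n := ⟨by omega⟩
  obtain ⟨g, h, hg1, hg2, hh1, hh2, hcl⟩ := key n hn h6
  let e : ZMod n ≃ Fin n := Fintype.equivFinOfCardEq (ZMod.card n)
  let φ := permMulEquiv e
  have hsupp : ∀ (p : Equiv.Perm (ZMod n)), p.support = Finset.univ →
      (φ p).support = Finset.univ := by
    intro p hp
    apply Finset.eq_univ_iff_forall.mpr
    intro x
    rw [Equiv.Perm.mem_support]
    show permMulEquiv e p x ≠ x
    rw [permMulEquiv_apply]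
    intro H
    have H2 : p (e.symm x) = e.symm x := by
      have := congrArg e.symm H
      simpa using this
    have := Finset.eq_univ_iff_forall.mp hp (e.symm x)
    rw [Equiv.Perm.mem_support] at this
    exact this H2
  refine ⟨φ g, φ h, isCycle_permMulEquiv e hg1, hsupp g hg2,
    isCycle_permMulEquiv e hh1, hsupp h hh2, ?_⟩
  have h1 := congrArg (Subgroup.map φ.toMonoidHom) hcl
  rw [MonoidHom.map_closure, Set.image_insert_eq, Set.image_singleton,
    Subgroup.map_top_of_surjective _ φ.surjective] at h1
  exact h1
end

section
/- Every element of the alternating group A_n (n ≥ 3) is a product of two n-cycles in S_n. -/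
set_option linter.unusedSectionVars false
set_option linter.unusedVariables false
set_option maxHeartbeats 1000000

open Equiv Equiv.Perm Finset

section TwoNCycles

variable {α : Type*} [DecidableEq α] [Fintype α]

private lemma perm_apply_inv_self' (f : Perm α) (x : α) : f (f⁻¹ x) = x :=
  Equiv.apply_symm_apply f x

private lemma perm_inv_apply_self' (f : Perm α) (x : α) : f⁻¹ (f x) = x :=
  Equiv.symm_apply_apply f x

private lemma full_apply_ne {h2 : Perm α} (hs : h2.support = Finset.univ) (x : α) : h2 x ≠ x := by
  have : x ∈ h2.support := hs ▸ Finset.mem_univ x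
  exact Perm.mem_support.mp this

private lemma reach_all {h2 : Perm α} (hc : h2.IsCycle) (hs : h2.support = Finset.univ)
    (h : Perm α) (x0 : α)
    (hcl : ∀ z, h.SameCycle x0 z → h.SameCycle x0 (h2 z)) :
    ∀ z, h.SameCycle x0 z := by
  have key : ∀ i : ℕ, h.SameCycle x0 ((h2 ^ i) x0) := by
    intro i
    induction i with
    | zero => simpa using Equiv.Perm.SameCycle.refl h x0
    | succ k ih =>
        have : (h2 ^ (k+1)) x0 = h2 ((h2 ^ k) x0) := by
          rw [pow_succ', Perm.mul_apply]
        rw [this]; exact hcl _ ih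
  intro z
  obtain ⟨i, hi⟩ := hc.exists_pow_eq (full_apply_ne hs x0) (full_apply_ne hs z)
  simpa [hi] using key i

private lemma walk {h2 h : Perm α} {E : Finset α}
    (hagree : ∀ w, w ∉ E → h⁻¹ w = h2⁻¹ w) {s x0 : α}
    (h0 : h.SameCycle s x0) :
    ∀ k : ℕ, (∀ j < k, ((h2⁻¹) ^ j) x0 ∉ E) → h.SameCycle s (((h2⁻¹) ^ k) x0) := by
  intro k
  induction k with
  | zero => intro _; simpa using h0
  | succ m ih =>
      intro hj
      have hm : h.SameCycle s (((h2⁻¹) ^ m) x0) := ih (fun j hjm => hj j (Nat.lt_succ_of_lt hjm))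
      have hnot : ((h2⁻¹) ^ m) x0 ∉ E := hj m (Nat.lt_succ_self m)
      have : ((h2⁻¹) ^ (m+1)) x0 = h⁻¹ (((h2⁻¹) ^ m) x0) := by
        rw [pow_succ', Perm.mul_apply, hagree _ hnot]
      rw [this]
      exact SameCycle.symm_apply_right hm

private lemma key_cycle {h2 : Perm α} (hc : h2.IsCycle) (hs : h2.support = Finset.univ)
    (hcard : 3 ≤ Fintype.card α) {a b y : α}
    (hab : a ≠ b) (hay : a ≠ y) (hby : b ≠ y) (hba : h2 b = a) :
    (Equiv.swap a y * Equiv.swap b y * h2).IsCycle ∧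
      (Equiv.swap a y * Equiv.swap b y * h2).support = Finset.univ := by
  set h : Perm α := Equiv.swap a y * Equiv.swap b y * h2 with hh
  have horder : orderOf h2 = Fintype.card α := by
    rw [hc.orderOf, hs, Finset.card_univ]
  have hsinv : h2⁻¹.support = Finset.univ := by rw [Equiv.Perm.support_inv, hs]
  have hcinv : (h2⁻¹).IsCycle := hc.inv
  have horderinv : orderOf h2⁻¹ = Fintype.card α := by rw [orderOf_inv, horder]
  have happ : ∀ z, h z = Equiv.swap a y (Equiv.swap b y (h2 z)) := fun z => rfl
  have hpib : Equiv.swap a y (Equiv.swap b y b) = a := by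
    rw [Equiv.swap_apply_left, Equiv.swap_apply_right]
  have hpia : Equiv.swap a y (Equiv.swap b y a) = y := by
    rw [Equiv.swap_apply_of_ne_of_ne hab hay, Equiv.swap_apply_left]
  have hpiy : Equiv.swap a y (Equiv.swap b y y) = b := by
    rw [Equiv.swap_apply_right, Equiv.swap_apply_of_ne_of_ne hab.symm hby]
  have hpioth : ∀ w, w ≠ a → w ≠ b → w ≠ y → Equiv.swap a y (Equiv.swap b y w) = w := by
    intro w hwa hwb hwy
    rw [Equiv.swap_apply_of_ne_of_ne hwb hwy, Equiv.swap_apply_of_ne_of_ne hwa hwy]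
  have h2ab : h2 a ≠ b := by
    intro hcon
    have h2sq : (h2 ^ 2) b = b := by
      simp [pow_succ, Perm.mul_apply, hba, hcon]
    have h1 : h2 ^ 2 = 1 := (hc.pow_eq_one_iff' (full_apply_ne hs b)).mpr h2sq
    have h2' : orderOf h2 ∣ 2 := orderOf_dvd_of_pow_eq_one h1
    rw [horder] at h2'
    have := Nat.le_of_dvd (by norm_num) h2'
    omega
  have hb : h b = y := by rw [happ, hba, hpia]
  set q : α := h2⁻¹ y with hq
  have h2q : h2 q = y := perm_apply_inv_self' h2 y
  have hhq : h q = b := by rw [happ, h2q, hpiy]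
  set E : Finset α := {a, b, y} with hE
  have hagree : ∀ w, w ∉ E → h⁻¹ w = h2⁻¹ w := by
    intro w hw
    simp only [hE, Finset.mem_insert, Finset.mem_singleton, not_or] at hw
    have : h (h2⁻¹ w) = w := by
      rw [happ, perm_apply_inv_self', hpioth w hw.1 hw.2.1 hw.2.2]
    conv_lhs => rw [← this]
    exact perm_inv_apply_self' h (h2⁻¹ w)
  have hSb : h.SameCycle b b := Equiv.Perm.SameCycle.refl h b
  have hSy : h.SameCycle b y := by rw [← hb]; exact SameCycle.apply_right hSb
  have hSq : h.SameCycle b q := by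
    have : h.SameCycle q b := by
      rw [← hhq]; exact SameCycle.apply_right (Equiv.Perm.SameCycle.refl h q)
    exact this.symm
  have hSa : h.SameCycle b a := by
    have hscinv : (h2⁻¹).SameCycle q a :=
      hcinv.sameCycle (full_apply_ne hsinv q) (full_apply_ne hsinv a)
    obtain ⟨m, hmlt, hm⟩ := hscinv.exists_pow_eq'
    have hex : ∃ k : ℕ, ((h2⁻¹) ^ k) q ∈ E := ⟨m, by rw [hm]; simp [hE]⟩
    obtain ⟨k, hkE, hkmin⟩ : ∃ k : ℕ, ((h2⁻¹) ^ k) q ∈ E ∧ ∀ j < k, ((h2⁻¹) ^ j) q ∉ E :=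
      ⟨Nat.find hex, Nat.find_spec hex, fun j hj => Nat.find_min hex hj⟩
    have hka : ((h2⁻¹) ^ k) q = a := by
      have hkE' : ((h2⁻¹) ^ k) q = a ∨ ((h2⁻¹) ^ k) q = b ∨ ((h2⁻¹) ^ k) q = y := by
        simpa [hE] using hkE
      rcases hkE' with hka | hkb | hky
      · exact hka
      · exfalso
        have hk0 : k ≠ 0 := by
          intro h0
          rw [h0, pow_zero, Perm.one_apply] at hkb
          have : h2 b = y := by rw [← hkb]; exact h2q
          rw [hba] at this; exact hay this
        obtain ⟨k', rfl⟩ := Nat.exists_eq_succ_of_ne_zero hk0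
        have hstep : ((h2⁻¹) ^ k') q = h2 (((h2⁻¹) ^ (k' + 1)) q) := by
          rw [pow_succ', Perm.mul_apply, perm_apply_inv_self']
        rw [hkb, hba] at hstep
        exact hkmin k' (Nat.lt_succ_self k') (by rw [hstep]; simp [hE])
      · exfalso
        have hloop : ((h2⁻¹) ^ (k + 1)) y = y := by
          rw [pow_succ, Perm.mul_apply]
          exact hky
        have h1 : (h2⁻¹) ^ (k + 1) = 1 :=
          (hcinv.pow_eq_one_iff' (full_apply_ne hsinv y)).mpr hloop
        have hdvd : orderOf h2⁻¹ ∣ (k + 1) := orderOf_dvd_of_pow_eq_one h1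
        rw [horderinv] at hdvd
        have hnle : Fintype.card α ≤ k + 1 := Nat.le_of_dvd (Nat.succ_pos k) hdvd
        have hmk : m ≠ k := by
          intro he; rw [he, hky] at hm; exact hay hm.symm
        have hmltk : m < k := by rw [horderinv] at hmlt; omega
        exact hkmin m hmltk (by rw [hm]; simp [hE])
    have := walk hagree hSq k hkmin
    rwa [hka] at this
  have hcl : ∀ z, h.SameCycle b z → h.SameCycle b (h2 z) := by
    intro z hz
    by_cases h1 : h2 z = a
    · rw [h1]; exact hSa
    by_cases h2' : h2 z = b
    · rw [h2']
    by_cases h3 : h2 z = y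
    · rw [h3]; exact hSy
    have : h z = h2 z := by rw [happ, hpioth _ h1 h2' h3]
    rw [← this]; exact SameCycle.apply_right hz
  have hall := reach_all hc hs h b hcl
  have hnofix : ∀ z, h z ≠ z := by
    intro z
    by_cases h1 : h2 z = a
    · have hzb : z = b := h2.injective (by rw [h1, hba])
      rw [happ, h1, hpia, hzb]
      exact Ne.symm hby
    by_cases h2' : h2 z = b
    · rw [happ, h2', hpib]
      intro he; rw [← he] at h2'; exact h2ab h2'
    by_cases h3 : h2 z = y
    · rw [happ, h3, hpiy]
      intro he; rw [← he, hba] at h3; exact hay h3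
    · rw [happ, hpioth _ h1 h2' h3]; exact full_apply_ne hs z
  have hsupp : h.support = Finset.univ := by
    ext z; simp [Perm.mem_support, hnofix z]
  exact ⟨⟨b, by rw [hb]; exact Ne.symm hby, fun z _ => hall z⟩, hsupp⟩

private lemma key_cycle2 {h2 : Perm α} (hc : h2.IsCycle) (hs : h2.support = Finset.univ)
    {a c b d : α}
    (hac : a ≠ c) (hab : a ≠ b) (had : a ≠ d) (hcb : c ≠ b) (hcd : c ≠ d) (hbd : b ≠ d)
    (hba : h2 b = a) (hdc : h2 d = c) :
    (Equiv.swap a c * Equiv.swap b d * h2).IsCycle ∧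
      (Equiv.swap a c * Equiv.swap b d * h2).support = Finset.univ := by
  set h : Perm α := Equiv.swap a c * Equiv.swap b d * h2 with hh
  have horder : orderOf h2 = Fintype.card α := by
    rw [hc.orderOf, hs, Finset.card_univ]
  have hsinv : h2⁻¹.support = Finset.univ := by rw [Equiv.Perm.support_inv, hs]
  have hcinv : (h2⁻¹).IsCycle := hc.inv
  have horderinv : orderOf h2⁻¹ = Fintype.card α := by rw [orderOf_inv, horder]
  have happ : ∀ z, h z = Equiv.swap a c (Equiv.swap b d (h2 z)) := fun z => rfl
  have hpia : Equiv.swap a c (Equiv.swap b d a) = c := by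
    rw [Equiv.swap_apply_of_ne_of_ne hab had, Equiv.swap_apply_left]
  have hpic : Equiv.swap a c (Equiv.swap b d c) = a := by
    rw [Equiv.swap_apply_of_ne_of_ne hcb hcd, Equiv.swap_apply_right]
  have hpib : Equiv.swap a c (Equiv.swap b d b) = d := by
    rw [Equiv.swap_apply_left, Equiv.swap_apply_of_ne_of_ne (Ne.symm had) (Ne.symm hcd)]
  have hpid : Equiv.swap a c (Equiv.swap b d d) = b := by
    rw [Equiv.swap_apply_right, Equiv.swap_apply_of_ne_of_ne (Ne.symm hab) (Ne.symm hcb)]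
  have hpioth : ∀ w, w ≠ a → w ≠ c → w ≠ b → w ≠ d →
      Equiv.swap a c (Equiv.swap b d w) = w := by
    intro w h1 h2' h3 h4
    rw [Equiv.swap_apply_of_ne_of_ne h3 h4, Equiv.swap_apply_of_ne_of_ne h1 h2']
  have hb : h b = c := by rw [happ, hba, hpia]
  have hd : h d = a := by rw [happ, hdc, hpic]
  set r : α := h2⁻¹ d with hr
  have h2r : h2 r = d := perm_apply_inv_self' h2 d
  have hhr : h r = b := by rw [happ, h2r, hpid]
  set E : Finset α := {a, c, b, d} with hE
  have hagree : ∀ w, w ∉ E → h⁻¹ w = h2⁻¹ w := by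
    intro w hw
    simp only [hE, Finset.mem_insert, Finset.mem_singleton, not_or] at hw
    have : h (h2⁻¹ w) = w := by
      rw [happ, perm_apply_inv_self', hpioth w hw.1 hw.2.1 hw.2.2.1 hw.2.2.2]
    conv_lhs => rw [← this]
    exact perm_inv_apply_self' h (h2⁻¹ w)
  have hSb : h.SameCycle b b := Equiv.Perm.SameCycle.refl h b
  have hSc : h.SameCycle b c := by rw [← hb]; exact SameCycle.apply_right hSb
  have hSr : h.SameCycle b r := by
    have : h.SameCycle r b := by
      rw [← hhr]; exact SameCycle.apply_right (Equiv.Perm.SameCycle.refl h r)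
    exact this.symm
  have hSa : h.SameCycle b a := by
    have hscinv : (h2⁻¹).SameCycle r a :=
      hcinv.sameCycle (full_apply_ne hsinv r) (full_apply_ne hsinv a)
    obtain ⟨m, hmlt, hm⟩ := hscinv.exists_pow_eq'
    rw [horderinv] at hmlt
    have hex : ∃ k : ℕ, ((h2⁻¹) ^ k) r ∈ E := ⟨m, by rw [hm]; simp [hE]⟩
    obtain ⟨k, hkE, hkmin⟩ : ∃ k : ℕ, ((h2⁻¹) ^ k) r ∈ E ∧ ∀ j < k, ((h2⁻¹) ^ j) r ∉ E :=
      ⟨Nat.find hex, Nat.find_spec hex, fun j hj => Nat.find_min hex hj⟩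
    have hka : ((h2⁻¹) ^ k) r = a := by
      have hkE' : ((h2⁻¹) ^ k) r = a ∨ ((h2⁻¹) ^ k) r = c ∨
          ((h2⁻¹) ^ k) r = b ∨ ((h2⁻¹) ^ k) r = d := by
        simpa [hE] using hkE
      rcases hkE' with hka | hkc | hkb | hkd
      · exact hka
      · -- z_k = c : full loop of length k+2
        exfalso
        have hstep : ((h2⁻¹) ^ (k + 1)) r = d := by
          rw [pow_succ', Perm.mul_apply, hkc, ← hdc, perm_inv_apply_self']
        have hloop : ((h2⁻¹) ^ (k + 2)) r = r := by
          have : ((h2⁻¹) ^ (k + 2)) r = h2⁻¹ (((h2⁻¹) ^ (k + 1)) r) := by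
            rw [pow_succ', Perm.mul_apply]
          rw [this, hstep, hr]
        have h1 : (h2⁻¹) ^ (k + 2) = 1 :=
          (hcinv.pow_eq_one_iff' (full_apply_ne hsinv r)).mpr hloop
        have hdvd : orderOf h2⁻¹ ∣ (k + 2) := orderOf_dvd_of_pow_eq_one h1
        rw [horderinv] at hdvd
        have hnle : Fintype.card α ≤ k + 2 := Nat.le_of_dvd (by omega) hdvd
        have hmk : m ≠ k := by
          intro he; rw [he, hkc] at hm; exact hac hm.symm
        have hmk1 : m ≠ k + 1 := by
          intro he; rw [he, hstep] at hm; exact had hm.symm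
        have hmltk : m < k := by omega
        exact hkmin m hmltk (by rw [hm]; simp [hE])
      · -- z_k = b
        exfalso
        have hk0 : k ≠ 0 := by
          intro h0
          rw [h0, pow_zero, Perm.one_apply] at hkb
          rw [hkb] at h2r
          rw [hba] at h2r; exact had h2r
        obtain ⟨k', rfl⟩ := Nat.exists_eq_succ_of_ne_zero hk0
        have hstep : ((h2⁻¹) ^ k') r = h2 (((h2⁻¹) ^ (k' + 1)) r) := by
          rw [pow_succ', Perm.mul_apply, perm_apply_inv_self']
        rw [hkb, hba] at hstep
        exact hkmin k' (Nat.lt_succ_self k') (by rw [hstep]; simp [hE])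
      · -- z_k = d : loop of length k+1
        exfalso
        have hloop : ((h2⁻¹) ^ (k + 1)) r = r := by
          have : ((h2⁻¹) ^ (k + 1)) r = h2⁻¹ (((h2⁻¹) ^ k) r) := by
            rw [pow_succ', Perm.mul_apply]
          rw [this, hkd, hr]
        have h1 : (h2⁻¹) ^ (k + 1) = 1 :=
          (hcinv.pow_eq_one_iff' (full_apply_ne hsinv r)).mpr hloop
        have hdvd : orderOf h2⁻¹ ∣ (k + 1) := orderOf_dvd_of_pow_eq_one h1
        rw [horderinv] at hdvd
        have hnle : Fintype.card α ≤ k + 1 := Nat.le_of_dvd (Nat.succ_pos k) hdvd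
        have hmk : m ≠ k := by
          intro he; rw [he, hkd] at hm; exact had hm.symm
        have hmltk : m < k := by omega
        exact hkmin m hmltk (by rw [hm]; simp [hE])
    have := walk hagree hSr k hkmin
    rwa [hka] at this
  have hSd : h.SameCycle b d := by
    have : h.SameCycle d a := by rw [← hd]; exact SameCycle.apply_right (Equiv.Perm.SameCycle.refl h d)
    exact hSa.trans this.symm
  have hcl : ∀ z, h.SameCycle b z → h.SameCycle b (h2 z) := by
    intro z hz
    by_cases h1 : h2 z = a
    · rw [h1]; exact hSa
    by_cases h2' : h2 z = c
    · rw [h2']; exact hSc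
    by_cases h3 : h2 z = b
    · rw [h3]
    by_cases h4 : h2 z = d
    · rw [h4]; exact hSd
    have : h z = h2 z := by rw [happ, hpioth _ h1 h2' h3 h4]
    rw [← this]; exact SameCycle.apply_right hz
  have hall := reach_all hc hs h b hcl
  have hnofix : ∀ z, h z ≠ z := by
    intro z
    by_cases h1 : h2 z = a
    · have hzb : z = b := h2.injective (by rw [h1, hba])
      rw [happ, h1, hpia, hzb]
      exact hcb
    by_cases h2' : h2 z = c
    · have hzd : z = d := h2.injective (by rw [h2', hdc])
      rw [happ, h2', hpic, hzd]
      exact had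
    by_cases h3 : h2 z = b
    · rw [happ, h3, hpib]
      intro he; rw [← he] at h3
      rw [hdc] at h3; exact hcb h3
    by_cases h4 : h2 z = d
    · rw [happ, h4, hpid]
      intro he; rw [← he] at h4
      rw [hba] at h4; exact had h4
    · rw [happ, hpioth _ h1 h2' h3 h4]; exact full_apply_ne hs z
  have hsupp : h.support = Finset.univ := by
    ext z; simp [Perm.mem_support, hnofix z]
  exact ⟨⟨b, by rw [hb]; intro e; exact hcb (id e), fun z _ => hall z⟩, hsupp⟩


private lemma formPerm_adj (l1 l2 : List α) (u v : α) (hnd : (l1 ++ u :: v :: l2).Nodup) :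
    (l1 ++ u :: v :: l2).formPerm u = v := by
  have h1 : l1.length < (l1 ++ u :: v :: l2).length := by simp
  have h2 : l1.length + 1 < (l1 ++ u :: v :: l2).length := by simp
  have hu : (l1 ++ u :: v :: l2)[l1.length] = u := by
    simp [List.getElem_append_right (Nat.le_refl l1.length)]
  have hv : (l1 ++ u :: v :: l2)[l1.length + 1] = v := by
    simp [List.getElem_append_right (Nat.le_succ_of_le (Nat.le_refl l1.length))]
  have h3 := List.formPerm_apply_getElem (l1 ++ u :: v :: l2) hnd l1.length h1
  rw [hu] at h3
  simp only [Nat.mod_eq_of_lt h2] at h3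
  rw [hv] at h3
  exact h3

private lemma base_cycle (hcard : 3 ≤ Fintype.card α) (L : List (α × α))
    (hnd : (L.flatMap fun p => [p.1, p.2]).Nodup) :
    ∃ c : Perm α, c.IsCycle ∧ c.support = Finset.univ ∧ ∀ p ∈ L, c p.1 = p.2 := by
  classical
  set P : List α := L.flatMap fun p => [p.1, p.2] with hP
  set rest : List α := (Finset.univ.toList (α := α)).filter (fun x => decide (x ∉ P)) with hrest
  set l : List α := P ++ rest with hl
  have hndl : l.Nodup := by
    refine List.Nodup.append hnd ((Finset.nodup_toList _).filter _) ?_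
    intro x hxP hxr
    rw [hrest, List.mem_filter] at hxr
    exact (of_decide_eq_true hxr.2) hxP
  have hcover : ∀ x : α, x ∈ l := by
    intro x
    rw [hl, List.mem_append]
    by_cases hx : x ∈ P
    · exact Or.inl hx
    · right
      rw [hrest, List.mem_filter]
      exact ⟨Finset.mem_toList.mpr (Finset.mem_univ x), decide_eq_true hx⟩
  have htf : l.toFinset = Finset.univ := by
    ext x; simp [List.mem_toFinset, hcover x]
  have hlen : l.length = Fintype.card α := by
    rw [← List.toFinset_card_of_nodup hndl, htf, Finset.card_univ]
  have hlen2 : 2 ≤ l.length := by omega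
  refine ⟨l.formPerm, List.isCycle_formPerm hndl hlen2, ?_, ?_⟩
  · rw [List.support_formPerm_of_nodup l hndl, htf]
    intro x hx
    rw [hx] at hlen
    simp at hlen
    omega
  · intro p hp
    obtain ⟨L1, L2, rfl⟩ := List.append_of_mem hp
    have hl2 : l = (L1.flatMap fun p => [p.1, p.2]) ++
        p.1 :: p.2 :: ((L2.flatMap fun p => [p.1, p.2]) ++ rest) := by
      simp [hl, hP, List.flatMap_append, List.flatMap_cons, List.append_assoc]
    rw [hl2] at hndl ⊢
    exact formPerm_adj _ _ _ _ hndl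




private lemma main_ind (hcard : 3 ≤ Fintype.card α) :
    ∀ N : ℕ, ∀ σ : Perm α, σ.support.card ≤ N → Equiv.Perm.sign σ = 1 →
    ∀ L : List (α × α), (L.flatMap fun p => [p.1, p.2]).Nodup →
    (∀ p ∈ L, σ p.1 = p.1 ∧ σ p.2 = p.2) →
    ∃ c : Perm α, c.IsCycle ∧ c.support = Finset.univ ∧
      (σ * c).IsCycle ∧ (σ * c).support = Finset.univ ∧ ∀ p ∈ L, (σ * c) p.1 = p.2 := by
  intro N
  induction N with
  | zero =>
      intro σ hN hsign L hnd hfix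
      have hσ1 : σ = 1 := by
        rwa [Nat.le_zero, Finset.card_eq_zero, Perm.support_eq_empty_iff] at hN
      subst hσ1
      obtain ⟨c, hc1, hc2, hc3⟩ := base_cycle hcard L hnd
      exact ⟨c, hc1, hc2, by simpa using hc1, by simpa using hc2, by simpa using hc3⟩
  | succ N ih =>
      intro σ hN hsign L hnd hfix
      by_cases hσ1 : σ = 1
      · subst hσ1
        obtain ⟨c, hc1, hc2, hc3⟩ := base_cycle hcard L hnd
        exact ⟨c, hc1, hc2, by simpa using hc1, by simpa using hc2, by simpa using hc3⟩
      have hPfix : ∀ x ∈ (L.flatMap fun p => [p.1, p.2]), σ x = x := by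
        intro x hx
        rw [List.mem_flatMap] at hx
        obtain ⟨p, hp, hxp⟩ := hx
        simp only [List.mem_cons, List.mem_singleton] at hxp
        rcases hxp with rfl | hxp
        · exact (hfix p hp).1
        · simp only [List.not_mem_nil, or_false] at hxp
          rw [hxp]
          exact (hfix p hp).2
      by_cases hA : ∃ w, σ w ≠ w ∧ σ (σ w) ≠ w
      · -- CASE A : some point lies in a cycle of length ≥ 3
        obtain ⟨a, ha, ha2⟩ := hA
        obtain ⟨y, hydef⟩ : ∃ y, y = σ a := ⟨_, rfl⟩
        obtain ⟨b, hbdef⟩ : ∃ b, b = σ⁻¹ a := ⟨_, rfl⟩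
        have hain : a ∈ σ.support := Perm.mem_support.mpr ha
        have hσb : σ b = a := by rw [hbdef]; exact perm_apply_inv_self' σ a
        have hσa : σ a = y := hydef.symm
        have hay : a ≠ y := by rw [hydef]; exact fun e => ha e.symm
        have hab : a ≠ b := by
          intro e
          rw [e] at ha
          rw [hσb] at ha
          exact ha e
        have hby : b ≠ y := by
          rw [hbdef, hydef]
          intro e
          apply ha2
          rw [← e, perm_apply_inv_self']
        have hbne : σ b ≠ b := by rw [hσb]; exact hab
        have hyne : σ y ≠ y := by
          intro e
          rw [hydef] at e
          exact ha (σ.injective e)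
        set σ2 : Perm α := Equiv.swap b y * (Equiv.swap a y * σ) with hσ2
        have hσeq : Equiv.swap a y * (Equiv.swap b y * σ2) = σ := by
          rw [hσ2, swap_mul_self_mul, swap_mul_self_mul]
        have hs2a : σ2 a = a := by
          rw [hσ2]
          simp only [Perm.mul_apply]
          rw [hσa, Equiv.swap_apply_right, Equiv.swap_apply_of_ne_of_ne hab hay]
        have hs2b : σ2 b = b := by
          rw [hσ2]
          simp only [Perm.mul_apply]
          rw [hσb, Equiv.swap_apply_left, Equiv.swap_apply_right]
        have hfixoth : ∀ x, σ x = x → σ2 x = x := by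
          intro x hx
          have hxa : x ≠ a := fun e => ha (by rw [← e]; exact hx)
          have hxb : x ≠ b := fun e => hbne (by rw [← e]; exact hx)
          have hxy : x ≠ y := fun e => hyne (by rw [← e]; exact hx)
          rw [hσ2]
          simp only [Perm.mul_apply]
          rw [hx, Equiv.swap_apply_of_ne_of_ne hxa hxy, Equiv.swap_apply_of_ne_of_ne hxb hxy]
        have hsub : σ2.support ⊆ σ.support := by
          intro x hx
          rw [Perm.mem_support] at hx ⊢
          intro hcon
          exact hx (hfixoth x hcon)
        have hanotin : a ∉ σ2.support := by simp [Perm.mem_support, hs2a]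
        have hcardlt : σ2.support.card ≤ N := by
          have hss : σ2.support ⊂ σ.support := ⟨hsub, fun hcon => hanotin (hcon hain)⟩
          have := Finset.card_lt_card hss
          omega
        have hsign2 : Equiv.Perm.sign σ2 = 1 := by
          rw [hσ2]
          simp [sign_swap hby, sign_swap hay, hsign]
        have hndnew : (((b, a) :: L).flatMap fun p => [p.1, p.2]).Nodup := by
          simp only [List.flatMap_cons, List.cons_append, List.nil_append]
          rw [List.nodup_cons, List.nodup_cons]
          refine ⟨?_, ?_, hnd⟩
          · rw [List.mem_cons]
            rintro (e | hbP)
            · exact hab e.symm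
            · exact hbne (hPfix b hbP)
          · intro haP
            exact ha (hPfix a haP)
        have hfixnew : ∀ p ∈ ((b, a) :: L), σ2 p.1 = p.1 ∧ σ2 p.2 = p.2 := by
          intro p hp
          rcases List.mem_cons.mp hp with rfl | hp
          · exact ⟨hs2b, hs2a⟩
          · exact ⟨hfixoth _ (hfix p hp).1, hfixoth _ (hfix p hp).2⟩
        obtain ⟨c, hc1, hc2, hc3, hc4, hc5⟩ := ih σ2 hcardlt hsign2 _ hndnew hfixnew
        have hmul : σ * c = Equiv.swap a y * Equiv.swap b y * (σ2 * c) := by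
          rw [← hσeq]
          simp only [mul_assoc]
        have hba2 : (σ2 * c) b = a := hc5 (b, a) List.mem_cons_self
        obtain ⟨hcy1, hcy2⟩ := key_cycle hc3 hc4 hcard hab hay hby hba2
        refine ⟨c, hc1, hc2, ?_, ?_, ?_⟩
        · rw [hmul]; exact hcy1
        · rw [hmul]; exact hcy2
        · intro p hp
          have hv := hc5 p (List.mem_cons_of_mem _ hp)
          have hvfix : σ p.2 = p.2 := (hfix p hp).2
          have hva : p.2 ≠ a := fun e => ha (by rw [← e]; exact hvfix)
          have hvb : p.2 ≠ b := fun e => hbne (by rw [← e]; exact hvfix)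
          have hvy : p.2 ≠ y := fun e => hyne (by rw [← e]; exact hvfix)
          rw [hmul]
          simp only [Perm.mul_apply] at hv ⊢
          rw [hv, Equiv.swap_apply_of_ne_of_ne hvb hvy, Equiv.swap_apply_of_ne_of_ne hva hvy]
      · -- CASE B : involution
        push_neg at hA
        have hinv : ∀ w, σ (σ w) = w := by
          intro w
          by_cases h : σ w = w
          · rw [h, h]
          · exact hA w h
        have hsupp0 : σ.support.Nonempty := by
          rw [Finset.nonempty_iff_ne_empty, Ne, Perm.support_eq_empty_iff]
          exact hσ1
        have hsupp3 : 3 ≤ σ.support.card := by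
          have h0 : σ.support.card ≠ 0 := by
            simp only [Ne, Finset.card_eq_zero]
            exact Finset.nonempty_iff_ne_empty.mp hsupp0
          have h1 : σ.support.card ≠ 1 := Perm.card_support_ne_one σ
          have h2 : σ.support.card ≠ 2 := by
            intro h2
            obtain ⟨x, z, hxz, rfl⟩ := Perm.card_support_eq_two.mp h2
            rw [sign_swap hxz] at hsign
            exact absurd hsign (by decide)
          omega
        obtain ⟨a, hain⟩ := hsupp0
        have ha : σ a ≠ a := Perm.mem_support.mp hain
        obtain ⟨b, hbin, hbne⟩ : ∃ b ∈ σ.support, b ∉ ({a, σ a} : Finset α) := by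
          by_contra hcon
          push_neg at hcon
          have hsubs : σ.support ⊆ ({a, σ a} : Finset α) := hcon
          have hle := Finset.card_le_card hsubs
          have h2 : ({a, σ a} : Finset α).card ≤ 2 :=
            (Finset.card_insert_le _ _).trans (by simp)
          omega
        simp only [Finset.mem_insert, Finset.mem_singleton, not_or] at hbne
        obtain ⟨hbag, hbA⟩ := hbne
        have hb : σ b ≠ b := Perm.mem_support.mp hbin
        have hσa2 : σ (σ a) = a := hinv a
        have hσb2 : σ (σ b) = b := hinv b
        have d1 : a ≠ σ a := fun e => ha e.symm
        have d2 : b ≠ σ b := fun e => hb e.symm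
        have d3 : a ≠ b := fun e => hbag e.symm
        have d4 : a ≠ σ b := by
          intro e
          have h' : σ a = b := by rw [e]; exact hσb2
          exact hbA h'.symm
        have d5 : σ a ≠ b := fun e => hbA e.symm
        have d6 : σ a ≠ σ b := fun e => d3 (σ.injective e)
        have hAfix : σ (σ a) ≠ σ a := by
          intro e
          rw [hσa2] at e
          exact ha e.symm
        have hBfix : σ (σ b) ≠ σ b := by
          intro e
          rw [hσb2] at e
          exact hb e.symm
        set σ2 : Perm α := Equiv.swap b (σ b) * (Equiv.swap a (σ a) * σ) with hσ2
        have hσeq : Equiv.swap a (σ a) * (Equiv.swap b (σ b) * σ2) = σ := by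
          rw [hσ2, swap_mul_self_mul, swap_mul_self_mul]
        have hs2a : σ2 a = a := by
          rw [hσ2]; simp only [Perm.mul_apply]
          rw [Equiv.swap_apply_right, Equiv.swap_apply_of_ne_of_ne d3 d4]
        have hs2A : σ2 (σ a) = σ a := by
          rw [hσ2]; simp only [Perm.mul_apply]
          rw [hσa2, Equiv.swap_apply_left, Equiv.swap_apply_of_ne_of_ne d5 d6]
        have hs2b : σ2 b = b := by
          rw [hσ2]; simp only [Perm.mul_apply]
          rw [Equiv.swap_apply_of_ne_of_ne (Ne.symm d4) (Ne.symm d6), Equiv.swap_apply_right]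
        have hs2B : σ2 (σ b) = σ b := by
          rw [hσ2]; simp only [Perm.mul_apply]
          rw [hσb2, Equiv.swap_apply_of_ne_of_ne (Ne.symm d3) (Ne.symm d5),
            Equiv.swap_apply_left]
        have hfixoth : ∀ x, σ x = x → σ2 x = x := by
          intro x hx
          have hxa : x ≠ a := fun e => ha (by rw [← e]; exact hx)
          have hxA : x ≠ σ a := by
            intro e
            rw [e] at hx
            rw [hσa2] at hx
            exact ha hx.symm
          have hxb : x ≠ b := fun e => hb (by rw [← e]; exact hx)
          have hxB : x ≠ σ b := by
            intro e
            rw [e] at hx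
            rw [hσb2] at hx
            exact hb hx.symm
          rw [hσ2]; simp only [Perm.mul_apply]
          rw [hx, Equiv.swap_apply_of_ne_of_ne hxa hxA, Equiv.swap_apply_of_ne_of_ne hxb hxB]
        have hsub : σ2.support ⊆ σ.support := by
          intro x hx
          rw [Perm.mem_support] at hx ⊢
          intro hcon
          exact hx (hfixoth x hcon)
        have hanotin : a ∉ σ2.support := by simp [Perm.mem_support, hs2a]
        have hcardlt : σ2.support.card ≤ N := by
          have hss : σ2.support ⊂ σ.support := ⟨hsub, fun hcon => hanotin (hcon hain)⟩
          have := Finset.card_lt_card hss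
          omega
        have hsign2 : Equiv.Perm.sign σ2 = 1 := by
          rw [hσ2]
          simp [sign_swap d2, sign_swap d1, hsign]
        have hndnew : (((b, a) :: (σ b, σ a) :: L).flatMap fun p => [p.1, p.2]).Nodup := by
          simp only [List.flatMap_cons, List.cons_append, List.nil_append]
          rw [List.nodup_cons, List.nodup_cons, List.nodup_cons, List.nodup_cons]
          refine ⟨?_, ?_, ?_, ?_, hnd⟩
          · rw [List.mem_cons, List.mem_cons, List.mem_cons]
            rintro (e | e | e | hP)
            · exact d3 e.symm
            · exact d2 e
            · exact hbA e
            · exact hb (hPfix b hP)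
          · rw [List.mem_cons, List.mem_cons]
            rintro (e | e | hP)
            · exact d4 e
            · exact d1 e
            · exact ha (hPfix a hP)
          · rw [List.mem_cons]
            rintro (e | hP)
            · exact d6 e.symm
            · exact hBfix (hPfix (σ b) hP)
          · intro hP
            exact hAfix (hPfix (σ a) hP)
        have hfixnew : ∀ p ∈ ((b, a) :: (σ b, σ a) :: L), σ2 p.1 = p.1 ∧ σ2 p.2 = p.2 := by
          intro p hp
          rcases List.mem_cons.mp hp with rfl | hp
          · exact ⟨hs2b, hs2a⟩
          rcases List.mem_cons.mp hp with rfl | hp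
          · exact ⟨hs2B, hs2A⟩
          · exact ⟨hfixoth _ (hfix p hp).1, hfixoth _ (hfix p hp).2⟩
        obtain ⟨c, hc1, hc2, hc3, hc4, hc5⟩ := ih σ2 hcardlt hsign2 _ hndnew hfixnew
        have hmul : σ * c = Equiv.swap a (σ a) * Equiv.swap b (σ b) * (σ2 * c) := by
          conv_lhs => rw [← hσeq]
          simp only [mul_assoc]
        have hba2 : (σ2 * c) b = a := hc5 (b, a) List.mem_cons_self
        have hdc2 : (σ2 * c) (σ b) = σ a :=
          hc5 (σ b, σ a) (List.mem_cons_of_mem _ List.mem_cons_self)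
        obtain ⟨hcy1, hcy2⟩ :=
          key_cycle2 hc3 hc4 d1 d3 d4 d5 d6 d2 hba2 hdc2
        refine ⟨c, hc1, hc2, ?_, ?_, ?_⟩
        · rw [hmul]; exact hcy1
        · rw [hmul]; exact hcy2
        · intro p hp
          have hv := hc5 p (List.mem_cons_of_mem _ (List.mem_cons_of_mem _ hp))
          have hvfix : σ p.2 = p.2 := (hfix p hp).2
          have hva : p.2 ≠ a := fun e => ha (by rw [← e]; exact hvfix)
          have hvA : p.2 ≠ σ a := by
            intro e
            rw [e] at hvfix
            rw [hσa2] at hvfix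
            exact ha hvfix.symm
          have hvb : p.2 ≠ b := fun e => hb (by rw [← e]; exact hvfix)
          have hvB : p.2 ≠ σ b := by
            intro e
            rw [e] at hvfix
            rw [hσb2] at hvfix
            exact hb hvfix.symm
          rw [hmul]
          simp only [Perm.mul_apply] at hv ⊢
          rw [hv, Equiv.swap_apply_of_ne_of_ne hvb hvB, Equiv.swap_apply_of_ne_of_ne hva hvA]

end TwoNCycles

/-- Every element of the alternating group `A_n` (`n ≥ 3`) is a product of two `n`-cycles. -/
theorem stmt10 (n : ℕ) (h3 : 3 ≤ n) (g : Equiv.Perm (Fin n))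
    (hg : g ∈ alternatingGroup (Fin n)) :
    ∃ x y : Equiv.Perm (Fin n),
      x.IsCycle ∧ x.support = Finset.univ ∧
      y.IsCycle ∧ y.support = Finset.univ ∧ g = x * y := by
  have hcard : 3 ≤ Fintype.card (Fin n) := by simpa using h3
  have hsign : Equiv.Perm.sign g = 1 := Equiv.Perm.mem_alternatingGroup.mp hg
  obtain ⟨c, hc1, hc2, hc3, hc4, -⟩ :=
    main_ind hcard g.support.card g (le_refl _) hsign [] (by simp) (by simp)
  refine ⟨g * c, c⁻¹, hc3, hc4, hc1.inv, ?_, ?_⟩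
  · rw [Equiv.Perm.support_inv]; exact hc2
  · rw [mul_assoc, mul_inv_cancel, mul_one]
end
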